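/- arXiv:1607.05468 — 9 statements merged into one kernel-verified Lean document; each statement's English description precedes it below -/
import Mathlib

section
/- Let R = K[x_1,...,x_k] be graded by weights W = [d_1,...,d_k] ∈ ℕ_+^k and let d = lcm(d_1,...,d_k). Then there exists a unique quasi-polynomial of period d, i.e. a list of polynomials P_0,...,P_{d-1} ∈ ℚ[x], such that for all sufficiently large n, the Hilbert function H_R^W(n) = dim_K of the n-th graded component equals P_i(n), where i ≡ n mod d. -/
/-- The Hilbert function of `K[x_1,…,x_k]` graded by weights `w`:
the number of `(a_1,…,a_k) ∈ ℕ^k` with `∑ aᵢ dᵢ = n`. -/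
noncomputable def hilbFn (k : ℕ) (w : Fin k → ℕ) (n : ℕ) : ℕ :=
  Nat.card {a : Fin k → ℕ // ∑ i, a i * w i = n}

lemma sol_finite (k : ℕ) (w : Fin k → ℕ) (hw : ∀ i, 0 < w i) (n : ℕ) :
    Finite {a : Fin k → ℕ // ∑ i, a i * w i = n} := by
  have key : ∀ (a : {a : Fin k → ℕ // ∑ i, a i * w i = n}) (i : Fin k), a.1 i < n + 1 := by
    rintro ⟨a, ha⟩ i
    show a i < n + 1
    have h1 : a i * w i ≤ ∑ j, a j * w j := Finset.single_le_sum
      (f := fun j => a j * w j) (fun j _ => Nat.zero_le _) (Finset.mem_univ i)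
    have h2 : a i ≤ a i * w i := Nat.le_mul_of_pos_right _ (hw i)
    simp only [ha] at h1
    omega
  apply Finite.of_injective (β := Fin k → Fin (n+1)) (f := fun a i => ⟨a.1 i, key a i⟩)
  intro a b h
  ext i
  exact congrArg Fin.val (congrFun h i)

lemma hilbFn_zero_of_pos (w : Fin 0 → ℕ) (n : ℕ) (hn : n ≠ 0) : hilbFn 0 w n = 0 := by
  have : IsEmpty {a : Fin 0 → ℕ // ∑ i, a i * w i = n} := by
    constructor; rintro ⟨a, ha⟩; simp at ha; exact hn ha.symm
  exact Nat.card_of_isEmpty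

def natSplit {β : Type*} (Q : ℕ → β → Prop) :
    {p : ℕ × β // Q p.1 p.2} ≃ {b : β // Q 0 b} ⊕ {p : ℕ × β // Q (p.1+1) p.2} where
  toFun := fun x => match x with
    | ⟨⟨0, b⟩, h⟩ => .inl ⟨b, h⟩
    | ⟨⟨j+1, b⟩, h⟩ => .inr ⟨⟨j, b⟩, h⟩
  invFun := fun x => match x with
    | .inl ⟨b, h⟩ => ⟨⟨0, b⟩, h⟩
    | .inr ⟨⟨j, b⟩, h⟩ => ⟨⟨j+1, b⟩, h⟩
  left_inv := by rintro ⟨⟨(_|j), b⟩, h⟩ <;> rfl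
  right_inv := by rintro (⟨b,h⟩|⟨⟨j,b⟩,h⟩) <;> rfl

lemma hilb_rec (k : ℕ) (w : Fin (k+1) → ℕ) (hw : ∀ i, 0 < w i) (n : ℕ) (hc : w 0 ≤ n) :
    hilbFn (k+1) w n = hilbFn k (fun i => w i.succ) n + hilbFn (k+1) w (n - w 0) := by
  classical
  have e1 : ∀ m : ℕ, {a : Fin (k+1) → ℕ // ∑ i, a i * w i = m} ≃
      {p : ℕ × (Fin k → ℕ) // p.1 * w 0 + ∑ i, p.2 i * w i.succ = m} := fun m =>
    Equiv.subtypeEquiv (Fin.consEquiv fun _ : Fin (k+1) => ℕ).symm (by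
      intro a
      rw [Fin.sum_univ_succ]
      simp [Fin.consEquiv, Fin.tail])
  have e2 := natSplit (β := Fin k → ℕ) (Q := fun j b => j * w 0 + ∑ i, b i * w i.succ = n)
  have e3 : {b : Fin k → ℕ // 0 * w 0 + ∑ i, b i * w i.succ = n} ≃
      {b : Fin k → ℕ // ∑ i, b i * w i.succ = n} :=
    Equiv.subtypeEquivRight (by intro b; simp)
  have e4 : {p : ℕ × (Fin k → ℕ) // (p.1+1) * w 0 + ∑ i, p.2 i * w i.succ = n} ≃
      {p : ℕ × (Fin k → ℕ) // p.1 * w 0 + ∑ i, p.2 i * w i.succ = n - w 0} :=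
    Equiv.subtypeEquivRight (by
      intro p
      rw [Nat.succ_mul]
      set m := p.1 * w 0 with hm
      omega)
  have E : {a : Fin (k+1) → ℕ // ∑ i, a i * w i = n} ≃
      {b : Fin k → ℕ // ∑ i, b i * w i.succ = n} ⊕
      {a : Fin (k+1) → ℕ // ∑ i, a i * w i = n - w 0} :=
    ((e1 n).trans e2).trans (Equiv.sumCongr e3 (e4.trans (e1 (n - w 0)).symm))
  haveI := sol_finite k (fun i => w i.succ) (fun i => hw i.succ) n
  haveI := sol_finite (k+1) w hw (n - w 0)
  rw [hilbFn, Nat.card_congr E, Nat.card_sum]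
  rfl

lemma antideriv (p : Polynomial ℚ) :
    ∃ q : Polynomial ℚ, ∀ m : ℕ, ∑ j ∈ Finset.range m, p.eval (j : ℚ) = q.eval (m : ℚ) := by
  classical
  have mono : ∀ i : ℕ, ∃ qi : Polynomial ℚ,
      ∀ m : ℕ, ∑ j ∈ Finset.range m, (j : ℚ) ^ i = qi.eval (m : ℚ) := by
    intro i
    refine ⟨∑ t ∈ Finset.range (i+1),
      Polynomial.C (bernoulli t * ((i+1).choose t) / (i+1)) * Polynomial.X ^ (i+1-t), ?_⟩
    intro m
    rw [sum_range_pow, Polynomial.eval_finset_sum]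
    refine Finset.sum_congr rfl fun t _ => ?_
    simp only [Polynomial.eval_mul, Polynomial.eval_C, Polynomial.eval_pow, Polynomial.eval_X]
    ring
  choose qi hqi using mono
  refine ⟨∑ i ∈ Finset.range (p.natDegree + 1), Polynomial.C (p.coeff i) * qi i, fun m => ?_⟩
  calc ∑ j ∈ Finset.range m, p.eval (j : ℚ)
      = ∑ j ∈ Finset.range m, ∑ i ∈ Finset.range (p.natDegree + 1), p.coeff i * (j:ℚ)^i := by
        exact Finset.sum_congr rfl fun j _ => Polynomial.eval_eq_sum_range _
    _ = ∑ i ∈ Finset.range (p.natDegree + 1), p.coeff i * ∑ j ∈ Finset.range m, (j:ℚ)^i := by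
        rw [Finset.sum_comm]
        exact Finset.sum_congr rfl fun i _ => (Finset.mul_sum _ _ _).symm
    _ = _ := by
        rw [Polynomial.eval_finset_sum]
        exact Finset.sum_congr rfl fun i _ => by rw [hqi i m]; simp

lemma exists_qp (d : ℕ) (hd : 0 < d) :
    ∀ (k : ℕ) (w : Fin k → ℕ), (∀ i, 0 < w i) → (∀ i, w i ∣ d) →
    ∃ P : ℕ → Polynomial ℚ, ∃ N : ℕ, ∀ n, N ≤ n →
      (P (n % d)).eval (n : ℚ) = (hilbFn k w n : ℚ) := by
  intro k
  induction k with
  | zero =>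
    intro w _ _
    refine ⟨fun _ => 0, 1, fun n hn => ?_⟩
    rw [hilbFn_zero_of_pos w n (by omega)]
    simp
  | succ k ih =>
    intro w hw hdvd
    obtain ⟨Q, N', hQ⟩ := ih (fun i => w i.succ) (fun i => hw i.succ) (fun i => hdvd i.succ)
    set c := w 0 with hc_def
    have hc : 0 < c := hw 0
    obtain ⟨e, hde⟩ := hdvd 0
    have he : 0 < e := by
      rcases Nat.eq_zero_or_pos e with h | h
      · rw [h, Nat.mul_zero] at hde; omega
      · exact h
    set g : ℕ → ℚ := fun n => (hilbFn k (fun i => w i.succ) n : ℚ) with hg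
    set f : ℕ → ℚ := fun n => (hilbFn (k+1) w n : ℚ) with hf
    have hrec : ∀ m n : ℕ, m * c ≤ n →
        f n = f (n - m * c) + ∑ t ∈ Finset.range m, g (n - t * c) := by
      intro m
      induction m with
      | zero => intro n _; simp
      | succ m ihm =>
        intro n hn
        rw [Nat.succ_mul] at hn
        have h1 : c ≤ n := by omega
        have h2 : m * c ≤ n - c := by omega
        have step : f n = g n + f (n - c) := by
          simp only [hf, hg]
          exact_mod_cast hilb_rec k w hw n h1
        rw [step, ihm (n - c) h2, Finset.sum_range_succ']
        have h3 : n - c - m * c = n - (m + 1) * c := by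
          rw [Nat.succ_mul, Nat.sub_sub, Nat.add_comm]
        have h4 : ∑ t ∈ Finset.range m, g (n - c - t * c)
            = ∑ t ∈ Finset.range m, g (n - (t + 1) * c) := by
          refine Finset.sum_congr rfl fun t _ => ?_
          congr 1
          rw [Nat.succ_mul, Nat.sub_sub, Nat.add_comm]
        rw [h3, h4]
        simp only [Nat.zero_mul, Nat.sub_zero]
        ring
    have hec : e * c = d := by rw [hde]; exact Nat.mul_comm e c
    have hrecd : ∀ n : ℕ, d ≤ n →
        f n = f (n - d) + ∑ t ∈ Finset.range e, g (n - t * c) := by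
      intro n hn
      have h := hrec e n (by rw [hec]; exact hn)
      rw [hec] at h
      exact h
    set N₁ := N' + d with hN₁
    set Gpoly : ℕ → Polynomial ℚ := fun r => ∑ t ∈ Finset.range e,
      (Q ((r + (d - t * c)) % d)).comp (Polynomial.X - Polynomial.C ((t * c : ℕ) : ℚ)) with hGp
    have hG : ∀ n : ℕ, N₁ ≤ n → (Gpoly (n % d)).eval (n : ℚ)
        = ∑ t ∈ Finset.range e, g (n - t * c) := by
      intro n hn
      rw [hGp]
      rw [Polynomial.eval_finset_sum]
      refine Finset.sum_congr rfl fun t ht => ?_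
      have ht' : t < e := Finset.mem_range.mp ht
      have htc : t * c + c ≤ d := by
        have h5 : (t + 1) * c ≤ e * c := Nat.mul_le_mul_right c ht'
        rw [Nat.succ_mul, hec] at h5
        omega
      have hle : t * c ≤ n := by omega
      have hidx : (n % d + (d - t * c)) % d = (n - t * c) % d := by
        rw [Nat.mod_add_mod]
        have h6 : n + (d - t * c) = (n - t * c) + d := by omega
        rw [h6, Nat.add_mod_right]
      rw [Polynomial.eval_comp]
      simp only [Polynomial.eval_sub, Polynomial.eval_X, Polynomial.eval_C]
      have hcast : (n : ℚ) - ((t * c : ℕ) : ℚ) = ((n - t * c : ℕ) : ℚ) := by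
        rw [Nat.cast_sub hle]
      rw [hcast, hidx, hQ (n - t * c) (by omega)]
    set b : ℕ → ℕ := fun r => (N₁ / d + 1) * d + r with hb
    have hb_mod : ∀ r, r < d → b r % d = r := by
      intro r hr
      show ((N₁ / d + 1) * d + r) % d = r
      rw [Nat.add_comm, Nat.add_mul_mod_self_right]
      exact Nat.mod_eq_of_lt hr
    have hb_ge : ∀ r, N₁ ≤ b r := by
      intro r
      show N₁ ≤ (N₁ / d + 1) * d + r
      have h1 := Nat.div_add_mod' N₁ d
      have h2 : N₁ % d < d := Nat.mod_lt _ hd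
      rw [Nat.succ_mul]
      omega
    have hb_lt : ∀ r, r < d → b r < N₁ + 2 * d := by
      intro r hr
      show (N₁ / d + 1) * d + r < N₁ + 2 * d
      have h1 := Nat.div_add_mod' N₁ d
      rw [Nat.succ_mul]
      omega
    have hqex : ∀ r : ℕ, ∃ q : Polynomial ℚ, ∀ m : ℕ,
        ∑ j ∈ Finset.range m, (Gpoly r).eval ((b r : ℚ) + ((j : ℚ) + 1) * (d : ℚ))
          = q.eval (m : ℚ) := by
      intro r
      obtain ⟨q, hq⟩ := antideriv ((Gpoly r).comp
        (Polynomial.C (b r : ℚ) + (Polynomial.X + 1) * Polynomial.C (d : ℚ)))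
      refine ⟨q, fun m => ?_⟩
      rw [← hq m]
      refine Finset.sum_congr rfl fun j _ => ?_
      rw [Polynomial.eval_comp]
      simp
    choose q hq using hqex
    have key : ∀ r, r < d → ∀ m : ℕ, f (b r + m * d) = f (b r) + (q r).eval (m : ℚ) := by
      intro r hr m
      induction m with
      | zero =>
        have h0 := (hq r 0).symm
        simp only [Finset.range_zero, Finset.sum_empty, Nat.cast_zero] at h0
        simp [h0]
      | succ m ihm =>
        have hdn : d ≤ b r + (m + 1) * d := by
          have h7 : (m + 1) * d = m * d + d := Nat.succ_mul m d
          omega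
        have e1 := hrecd (b r + (m + 1) * d) hdn
        have hsub : b r + (m + 1) * d - d = b r + m * d := by
          rw [Nat.succ_mul]; omega
        have hmod : (b r + (m + 1) * d) % d = r := by
          rw [Nat.add_mul_mod_self_right]
          exact hb_mod r hr
        have hNle : N₁ ≤ b r + (m + 1) * d := le_trans (hb_ge r) (Nat.le_add_right _ _)
        have e2 := hG (b r + (m + 1) * d) hNle
        rw [hmod] at e2
        have ecast : ((b r + (m + 1) * d : ℕ) : ℚ) = (b r : ℚ) + ((m : ℚ) + 1) * (d : ℚ) := by
          push_cast; ring
        have e4 := hq r (m + 1)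
        rw [Finset.sum_range_succ, hq r m] at e4
        rw [e1, hsub, ihm, ← e2, ← e4, ecast]
        ring
    refine ⟨fun r => Polynomial.C (f (b r)) + (q r).comp
      (Polynomial.C ((d : ℚ))⁻¹ * (Polynomial.X - Polynomial.C ((b r : ℕ) : ℚ))),
      N₁ + 2 * d, ?_⟩
    intro n hn
    have hr0 : n % d < d := Nat.mod_lt _ hd
    set r := n % d with hrdef
    have hr : r < d := hr0
    have hbn : b r ≤ n := by
      have := hb_lt r hr
      omega
    obtain ⟨m, hm⟩ : ∃ m, n = b r + m * d := by
      have hdv : d ∣ n - b r :=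
        (Nat.modEq_iff_dvd' hbn).mp (by rw [Nat.ModEq, hb_mod r hr])
      refine ⟨(n - b r) / d, ?_⟩
      rw [Nat.div_mul_cancel hdv]
      omega
    have harg : ((d : ℚ))⁻¹ * ((n : ℚ) - ((b r : ℕ) : ℚ)) = (m : ℚ) := by
      have hd0 : (d : ℚ) ≠ 0 := Nat.cast_ne_zero.mpr (by omega)
      rw [hm]
      push_cast
      field_simp
      ring
    simp only [Polynomial.eval_add, Polynomial.eval_C, Polynomial.eval_comp,
      Polynomial.eval_mul, Polynomial.eval_sub, Polynomial.eval_X]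
    rw [harg, ← key r hr m, ← hm]

theorem stmt0 (k : ℕ) (w : Fin k → ℕ) (hw : ∀ i, 0 < w i) :
    ∃! P : ZMod (Finset.univ.lcm w) → Polynomial ℚ,
      ∃ N : ℕ, ∀ n : ℕ, N ≤ n →
        (P (n : ZMod (Finset.univ.lcm w))).eval (n : ℚ) = hilbFn k w n := by
  set d := Finset.univ.lcm w with hd_def
  have hd : 0 < d := by
    rcases Nat.eq_zero_or_pos d with h | h
    · exfalso
      rw [hd_def, Finset.lcm_eq_zero_iff] at h
      obtain ⟨i, -, hi⟩ := h
      exact (hw i).ne' hi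
    · exact h
  haveI : NeZero d := ⟨hd.ne'⟩
  obtain ⟨P0, N, hP⟩ := exists_qp d hd k w hw (fun i => Finset.dvd_lcm (Finset.mem_univ i))
  have uniq : ∀ P₁ P₂ : ZMod d → Polynomial ℚ,
      (∃ N₁ : ℕ, ∀ n : ℕ, N₁ ≤ n → (P₁ (n : ZMod d)).eval (n : ℚ) = hilbFn k w n) →
      (∃ N₂ : ℕ, ∀ n : ℕ, N₂ ≤ n → (P₂ (n : ZMod d)).eval (n : ℚ) = hilbFn k w n) →
      P₁ = P₂ := by
    rintro P₁ P₂ ⟨N₁, h₁⟩ ⟨N₂, h₂⟩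
    funext z
    apply Polynomial.eq_of_infinite_eval_eq
    apply Set.infinite_of_injective_forall_mem
      (f := fun m : ℕ => ((z.val + (N₁ + N₂ + m) * d : ℕ) : ℚ))
    · intro a b hab
      have hab' : z.val + (N₁ + N₂ + a) * d = z.val + (N₁ + N₂ + b) * d :=
        Nat.cast_injective hab
      simp only [Nat.add_mul] at hab'
      have : a * d = b * d := by omega
      exact Nat.eq_of_mul_eq_mul_right hd this
    · intro m
      set n := z.val + (N₁ + N₂ + m) * d with hn_def
      have hcast : (n : ZMod d) = z := by
        have : ((n : ℕ) : ZMod d) = ((z.val : ℕ) : ZMod d)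
            + ((N₁ + N₂ + m : ℕ) : ZMod d) * ((d : ℕ) : ZMod d) := by
          rw [hn_def]
          simp [Nat.cast_add, Nat.cast_mul]
        rw [this, ZMod.natCast_self, mul_zero, add_zero]
        exact ZMod.natCast_rightInverse z
      have hge : ∀ M : ℕ, M ≤ N₁ + N₂ + m → M ≤ n := by
        intro M hM
        have : N₁ + N₂ + m ≤ (N₁ + N₂ + m) * d := Nat.le_mul_of_pos_right _ hd
        omega
      have e₁ := h₁ n (hge N₁ (by omega))
      have e₂ := h₂ n (hge N₂ (by omega))
      rw [hcast] at e₁ e₂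
      show (P₁ z).eval ((n : ℕ) : ℚ) = (P₂ z).eval ((n : ℕ) : ℚ)
      rw [e₁, e₂]
  have hprop : ∃ N' : ℕ, ∀ n : ℕ, N' ≤ n →
      ((fun z : ZMod d => P0 z.val) (n : ZMod d)).eval (n : ℚ) = hilbFn k w n := by
    refine ⟨N, fun n hn => ?_⟩
    show (P0 (n : ZMod d).val).eval (n : ℚ) = _
    rw [ZMod.val_natCast]
    exact hP n hn
  exact ⟨fun z => P0 z.val, hprop, fun P' h' => uniq P' _ h' hprop⟩
end

section
/- Let d_1,...,d_k be positive integers, d = lcm(d_1,...,d_k), and for each s set M_s = {d/d_s, 2·d/d_s, ..., (d_s−1)·d/d_s}. Then for any subset {j_1,...,j_r} ⊆ {1,...,k}, writing g = gcd(d_{j_1},...,d_{j_r}), the intersection M_{j_1} ∩ ··· ∩ M_{j_r} equals {d/g, 2·d/g, ..., (g−1)·d/g}. -/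
theorem stmt3 (k : ℕ) (d : Fin k → ℕ) (hd : ∀ i, 0 < d i)
    (M : Fin k → Set ℕ)
    (hM : ∀ s, M s =
      {x | ∃ t, 1 ≤ t ∧ t < d s ∧ x = t * (Finset.univ.lcm d / d s)})
    (J : Finset (Fin k)) (hJ : J.Nonempty) :
    ⋂ s ∈ J, M s =
      {x | ∃ t, 1 ≤ t ∧ t < J.gcd d ∧ x = t * (Finset.univ.lcm d / J.gcd d)} := by
  classical
  set D := Finset.univ.lcm d with hD
  set g := J.gcd d with hg
  obtain ⟨s0, hs0⟩ := hJ
  have hdD : ∀ s, d s ∣ D := fun s => Finset.dvd_lcm (Finset.mem_univ s)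
  have hDpos : 0 < D := by
    rw [Nat.pos_iff_ne_zero]
    intro h0
    rw [hD, Finset.lcm_eq_zero_iff] at h0
    obtain ⟨i, -, hi⟩ := h0
    exact (hd i).ne' hi
  have hgdvd : ∀ s ∈ J, g ∣ d s := fun s hs => Finset.gcd_dvd hs
  have hgpos : 0 < g := Nat.pos_of_dvd_of_pos (hgdvd s0 hs0) (hd s0)
  have hgD : g ∣ D := (hgdvd s0 hs0).trans (hdD s0)
  -- key characterization
  have key : ∀ a : ℕ, a ∣ D → 0 < a → ∀ x : ℕ,
      (∃ t, 1 ≤ t ∧ t < a ∧ x = t * (D / a)) ↔ (D / a ∣ x ∧ 0 < x ∧ x < D) := by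
    intro a ha hapos x
    have hq : 0 < D / a := Nat.div_pos (Nat.le_of_dvd hDpos ha) hapos
    have hDa : a * (D / a) = D := Nat.mul_div_cancel' ha
    constructor
    · rintro ⟨t, h1, h2, rfl⟩
      refine ⟨dvd_mul_left _ _, Nat.mul_pos h1 hq, ?_⟩
      calc t * (D / a) < a * (D / a) := (Nat.mul_lt_mul_right hq).mpr h2
        _ = D := hDa
    · rintro ⟨⟨t, rfl⟩, hx0, hxD⟩
      refine ⟨t, ?_, ?_, mul_comm _ _⟩
      · rcases Nat.eq_zero_or_pos t with rfl | h
        · simp at hx0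
        · exact h
      · by_contra hle
        push_neg at hle
        have : D ≤ D / a * t := by
          calc D = a * (D / a) := hDa.symm
            _ ≤ t * (D / a) := Nat.mul_le_mul_right _ hle
            _ = D / a * t := mul_comm _ _
        omega
    
  have hdvd_iff : ∀ x : ℕ, (∀ s ∈ J, D / d s ∣ x) ↔ D / g ∣ x := by
    intro x
    constructor
    · intro h
      rw [Nat.div_dvd_iff_dvd_mul hgD hgpos]
      have h1 : ∀ s ∈ J, D ∣ d s * x := by
        intro s hs
        exact (Nat.div_dvd_iff_dvd_mul (hdD s) (hd s)).mp (h s hs)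
      have h2 : D ∣ J.gcd (fun s => x * d s) := by
        apply Finset.dvd_gcd
        intro s hs
        rw [mul_comm]
        exact h1 s hs
      have h3 : J.gcd (fun s => x * d s) = x * g := by
        rw [hg, Finset.gcd_mul_left]
        simp
      rw [h3, mul_comm] at h2
      exact h2
    · intro h s hs
      refine dvd_trans ?_ h
      obtain ⟨m, hm⟩ := hgdvd s hs
      have hDg : D / g = m * (D / d s) := by
        apply Nat.div_eq_of_eq_mul_right hgpos
        calc D = d s * (D / d s) := (Nat.mul_div_cancel' (hdD s)).symm
          _ = g * (m * (D / d s)) := by rw [hm]; ring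
      rw [hDg]
      exact dvd_mul_left _ _
  ext x
  simp only [Set.mem_iInter, hM, Set.mem_setOf_eq]
  rw [key g hgD hgpos x]
  constructor
  · intro h
    have hall : ∀ s ∈ J, D / d s ∣ x ∧ 0 < x ∧ x < D := by
      intro s hs
      exact (key (d s) (hdD s) (hd s) x).mp (h s hs)
    have hx := (hall s0 hs0).2
    exact ⟨(hdvd_iff x).mp (fun s hs => (hall s hs).1), hx.1, hx.2⟩
  · rintro ⟨h1, h2, h3⟩ s hs
    exact (key (d s) (hdD s) (hd s) x).mpr ⟨(hdvd_iff x).mpr h1 s hs, h2, h3⟩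
end

section
/- Let d_1,...,d_k be positive integers with gcd(d_1,...,d_k) = 1, d = lcm(d_1,...,d_k), δ = max{ |I| : I ⊆ {1,...,k}, gcd(d_i)_{i∈I} ≠ 1 }, M_s = {d/d_s, 2d/d_s,...,(d_s−1)d/d_s}, and T_r the set of elements p ∈ ⋃ M_i belonging to exactly r of the sets M_i. Then T_r = ∅ for all r with δ < r ≤ k. -/
theorem stmt4 (k : ℕ) (d : Fin k → ℕ) (hd : ∀ i, 0 < d i)
    (hgcd : Finset.univ.gcd d = 1)
    (δ : ℕ)
    (hδ : IsGreatest {m | ∃ I : Finset (Fin k), I.gcd d ≠ 1 ∧ I.card = m} δ)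
    (M : Fin k → Set ℕ)
    (hM : ∀ s, M s =
      {x | ∃ t, 1 ≤ t ∧ t < d s ∧ x = t * (Finset.univ.lcm d / d s)})
    (r : ℕ) (hr1 : δ < r) (hr2 : r ≤ k) :
    {p : ℕ | ∃ J : Finset (Fin k), J.card = r ∧ ∀ s ∈ J, p ∈ M s} = ∅ := by
  set L := Finset.univ.lcm d with hL
  ext p
  simp only [Set.mem_setOf_eq, Set.mem_empty_iff_false, iff_false]
  rintro ⟨J, hJcard, hJ⟩
  -- J.gcd d must be 1, else card J ≤ δ
  by_cases hg : J.gcd d = 1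
  · -- derive L ∣ p, 0 < p < L, contradiction
    have hL0 : L ≠ 0 := by
      rw [hL]
      intro h
      rw [Finset.lcm_eq_zero_iff] at h
      obtain ⟨i, _, hi⟩ := h
      exact (hd i).ne' hi
    -- J is nonempty
    have hJne : J.Nonempty := by
      rw [← Finset.card_pos, hJcard]
      omega
    obtain ⟨s₀, hs₀⟩ := hJne
    have hdvdL : ∀ s, d s ∣ L := fun s => Finset.dvd_lcm (Finset.mem_univ s)
    -- each s ∈ J : L/d s ∣ p
    have hdvd : ∀ s ∈ J, L ∣ p * d s := by
      intro s hs
      have := hJ s hs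
      rw [hM s] at this
      obtain ⟨t, ht1, ht2, ht3⟩ := this
      have h1 : L / d s ∣ p := ⟨t, by rw [ht3]; ring⟩
      calc L = (L / d s) * d s := (Nat.div_mul_cancel (hdvdL s)).symm
        _ ∣ p * d s := mul_dvd_mul_right h1 _
    have hLp : L ∣ p := by
      have : L ∣ J.gcd (fun s => p * d s) := Finset.dvd_gcd hdvd
      rwa [Finset.gcd_mul_left, hg, mul_one, normalize_eq] at this
    -- p > 0 and p < L
    have hmem := hJ s₀ hs₀
    rw [hM s₀] at hmem
    obtain ⟨t, ht1, ht2, ht3⟩ := hmem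
    have hLd : 0 < L / d s₀ := Nat.div_pos (Nat.le_of_dvd (Nat.pos_of_ne_zero hL0) (hdvdL s₀)) (hd s₀)
    have hp0 : 0 < p := by
      rw [ht3]; exact Nat.mul_pos ht1 hLd
    have hpL : p < L := by
      rw [ht3]
      calc t * (L / d s₀) < d s₀ * (L / d s₀) := by
            exact (Nat.mul_lt_mul_right hLd).mpr ht2
        _ = L := Nat.mul_div_cancel' (hdvdL s₀)
    have := Nat.le_of_dvd hp0 hLp
    omega
  · have : r ≤ δ := hδ.2 ⟨J, hg, hJcard⟩
    omega
end

section
/- Let R = K[x_1,...,x_k] be graded by W = [d_1,...,d_k] with gcd(d_1,...,d_k) = 1 and d = lcm(d_1,...,d_k). Then each polynomial P_i of the Hilbert quasi-polynomial P_R^W = {P_0,...,P_{d−1}} has degree exactly k−1, and its leading coefficient equals 1 / ((k−1)! · d_1 d_2 ··· d_k). -/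
open Finset Polynomial

private lemma bezout' {ι : Type*} [DecidableEq ι] (s : Finset ι) (f : ι → ℕ) :
    ∃ c : ι → ℤ, ∑ j ∈ s, c j * f j = ((s.gcd f : ℕ) : ℤ) := by
  induction s using Finset.induction_on with
  | empty => exact ⟨0, by simp⟩
  | @insert a s ha ih =>
    obtain ⟨c, hc⟩ := ih
    set g := s.gcd f with hg
    refine ⟨fun j => if j = a then Nat.gcdA (f a) g else c j * Nat.gcdB (f a) g, ?_⟩
    rw [Finset.sum_insert ha, Finset.gcd_insert]
    have hgcd : ((GCDMonoid.gcd (f a) (s.gcd f) : ℕ) : ℤ)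
        = (f a) * Nat.gcdA (f a) g + (g : ℤ) * Nat.gcdB (f a) g := by
      rw [show (GCDMonoid.gcd (f a) (s.gcd f) : ℕ) = Nat.gcd (f a) g from rfl, Nat.gcd_eq_gcd_ab]
    rw [hgcd]
    have hb : (fun j => if j = a then (f a).gcdA g else c j * (f a).gcdB g) a = (f a).gcdA g := by
      simp
    have hs : ∑ j ∈ s, (if j = a then (Nat.gcdA (f a) g) else c j * Nat.gcdB (f a) g) * (f j : ℤ)
        = (∑ j ∈ s, c j * f j) * Nat.gcdB (f a) g := by
      rw [Finset.sum_mul]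
      refine Finset.sum_congr rfl fun j hj => ?_
      rw [if_neg (by rintro rfl; exact ha hj)]; ring
    rw [hb, hs, hc]; ring

private lemma nat_card_sigma {ι : Type*} [Fintype ι] (β : ι → Type*) [∀ i, Finite (β i)] :
    Nat.card (Σ i, β i) = ∑ i, Nat.card (β i) := by
  letI : ∀ i, Fintype (β i) := fun i => Fintype.ofFinite _
  simp [Nat.card_eq_fintype_card, Fintype.card_sigma]

private lemma card_sum_eq (k M : ℕ) :
    Nat.card {c : Fin k → ℕ // ∑ i, c i = M} = (k + M - 1).choose M := by
  rw [← Nat.card_congr (Sym.equivNatSumOfFintype (Fin k) M), Nat.card_eq_fintype_card,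
    Sym.card_sym_eq_choose, Fintype.card_fin]

private lemma choose_eq_q (K M : ℕ) :
    (((K+1) + M - 1).choose M : ℚ) =
      ((K.factorial : ℚ))⁻¹ * ∏ j ∈ Finset.range K, ((M : ℚ) + j + 1) := by
  have h1 : ∀ j : ℕ, (((M+1).ascFactorial j : ℕ) : ℚ) = ∏ t ∈ Finset.range j, ((M:ℚ) + t + 1) := by
    intro j; induction j with
    | zero => simp
    | succ j ih =>
      rw [Nat.ascFactorial_succ, Finset.prod_range_succ, Nat.cast_mul, ih]; push_cast; ring
  have h2 : (M+1).ascFactorial K = K.factorial * (M + K).choose K :=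
    Nat.ascFactorial_eq_factorial_mul_choose M K
  have h3 : ((K+1) + M - 1).choose M = (M + K).choose K := by
    have e1 : (K+1) + M - 1 = M + K := by omega
    rw [e1]
    have := Nat.choose_symm (Nat.le_add_left K M)
    rwa [Nat.add_sub_cancel] at this
  have hfac : (K.factorial : ℚ) ≠ 0 := Nat.cast_ne_zero.mpr K.factorial_ne_zero
  rw [h3, ← h1, h2]
  push_cast
  field_simp

private lemma fiber_count (k s d n : ℕ) (hd : 0 < d) :
    Nat.card {c : Fin k → ℕ // s + d * ∑ i, c i = n} =
      if s ≤ n ∧ s % d = n % d then (k + (n - s)/d - 1).choose ((n - s)/d) else 0 := by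
  split_ifs with h
  · obtain ⟨h1, h2⟩ := h
    have hdvd : d ∣ n - s := (Nat.modEq_iff_dvd' h1).mp h2
    rw [← card_sum_eq k ((n-s)/d)]
    apply Nat.card_congr
    apply Equiv.subtypeEquivRight
    intro c
    constructor
    · intro hc
      have h3 : n - s = d * ∑ i, c i := by omega
      rw [← Nat.mul_div_cancel_left (∑ i, c i) hd, ← h3]
    · intro hc
      have h4 : d * ((n - s)/d) = n - s := Nat.mul_div_cancel' hdvd
      rw [hc]; omega
  · rw [Nat.card_eq_zero]
    left
    rw [isEmpty_subtype]
    intro c hc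
    apply h
    constructor
    · omega
    · have : n % d = (s + (∑ i, c i) * d) % d := by rw [mul_comm]; rw [hc]
      rw [this, Nat.add_mul_mod_self_right]

private lemma hilb_decomp (k : ℕ) (w : Fin k → ℕ) (d : ℕ) (hd : 0 < d)
    (hew : ∀ i, (d / w i) * w i = d) [inst : ∀ i, NeZero (d / w i)] (n : ℕ) :
    hilbFn k w n = ∑ r : (∀ i, ZMod (d / w i)),
      Nat.card {c : Fin k → ℕ // (∑ i, (r i).val * w i) + d * ∑ i, c i = n} := by
  classical
  set e := fun i => d / w i with he_def
  have he : ∀ i, 0 < e i := fun i => Nat.pos_of_ne_zero (inst i).out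
  have hbound : ∀ (s : ℕ) (c : {c : Fin k → ℕ // s + d * ∑ i, c i = n}) (i : Fin k),
      c.1 i < n + 1 := by
    intro s c i
    have h1 : c.1 i ≤ ∑ j, c.1 j :=
      Finset.single_le_sum (fun j _ => Nat.zero_le _) (Finset.mem_univ i)
    have h2 : ∑ j, c.1 j ≤ d * ∑ j, c.1 j := Nat.le_mul_of_pos_left _ hd
    have h3 := c.2
    omega
  haveI hfin : ∀ (r : ∀ i, ZMod (e i)),
      Finite {c : Fin k → ℕ // (∑ i, (r i).val * w i) + d * ∑ i, c i = n} := fun r =>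
    Finite.of_injective (fun c => (fun i => (⟨c.1 i, hbound _ c i⟩ : Fin (n+1))))
      (fun c c' h => Subtype.ext (funext fun i => congrArg Fin.val (congrFun h i)))
  let F : (Σ r : (∀ i, ZMod (e i)),
      {c : Fin k → ℕ // (∑ i, (r i).val * w i) + d * ∑ i, c i = n}) →
      {a : Fin k → ℕ // ∑ i, a i * w i = n} :=
    fun p => ⟨fun i => (p.1 i).val + e i * p.2.1 i, by
      have hc := p.2.2
      refine Eq.trans ?_ hc
      rw [Finset.mul_sum, ← Finset.sum_add_distrib]
      refine Finset.sum_congr rfl fun i _ => ?_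
      show ((p.1 i).val + e i * p.2.1 i) * w i = (p.1 i).val * w i + d * p.2.1 i
      calc ((p.1 i).val + e i * p.2.1 i) * w i
          = (p.1 i).val * w i + (e i * w i) * p.2.1 i := by ring
        _ = (p.1 i).val * w i + d * p.2.1 i := by rw [hew i]⟩
  have hF : Function.Bijective F := by
    constructor
    · rintro ⟨r, c, hc⟩ ⟨r', c', hc'⟩ h
      have h' : ∀ i, (r i).val + e i * c i = (r' i).val + e i * c' i := by
        intro i
        exact congrFun (congrArg Subtype.val h) i
      have hv : ∀ i, (r i).val = (r' i).val := by
        intro i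
        have := congrArg (· % e i) (h' i)
        simpa [Nat.add_mul_mod_self_left, Nat.mod_eq_of_lt (ZMod.val_lt (r i)),
          Nat.mod_eq_of_lt (ZMod.val_lt (r' i))] using this
      have hr : r = r' := funext fun i => ZMod.val_injective _ (hv i)
      subst hr
      have hcc : c = c' := funext fun i =>
        Nat.eq_of_mul_eq_mul_left (he i) (by have := h' i; omega)
      subst hcc
      rfl
    · rintro ⟨a, ha⟩
      refine ⟨⟨fun i => ((a i : ℕ) : ZMod (e i)), ⟨fun i => a i / e i, ?_⟩⟩, ?_⟩
      · rw [← ha]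
        have hval : ∀ i, ((a i : ZMod (e i))).val = a i % e i := fun i => ZMod.val_natCast _ _
        simp only [hval]
        rw [Finset.mul_sum, ← Finset.sum_add_distrib]
        refine Finset.sum_congr rfl fun i _ => ?_
        calc a i % e i * w i + d * (a i / e i)
            = a i % e i * w i + (e i * w i) * (a i / e i) := by rw [hew i]
          _ = (e i * (a i / e i) + a i % e i) * w i := by ring
          _ = a i * w i := by rw [Nat.div_add_mod]
      · apply Subtype.ext; funext i
        show ((a i : ZMod (e i))).val + e i * (a i / e i) = a i
        rw [ZMod.val_natCast, Nat.mod_add_div]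
  rw [show hilbFn k w n = Nat.card {a : Fin k → ℕ // ∑ i, a i * w i = n} from rfl,
    ← Nat.card_congr (Equiv.ofBijective F hF), nat_card_sigma]

theorem stmt7 (k : ℕ) (w : Fin k → ℕ) (hw : ∀ i, 0 < w i)
    (hgcd : Finset.univ.gcd w = 1)
    (P : ZMod (Finset.univ.lcm w) → Polynomial ℚ)
    (hP : ∃ N : ℕ, ∀ n : ℕ, N ≤ n →
      (P (n : ZMod (Finset.univ.lcm w))).eval (n : ℚ) = hilbFn k w n)
    (i : ZMod (Finset.univ.lcm w)) :
    (P i).natDegree = k - 1 ∧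
      (P i).leadingCoeff = 1 / ((k - 1).factorial * ∏ j, (w j : ℚ)) := by
  classical
  have hk : 0 < k := by
    rcases Nat.eq_zero_or_pos k with hk0 | hk
    · exfalso; subst hk0
      rw [Finset.univ_eq_empty, Finset.gcd_empty] at hgcd
      exact absurd hgcd (by norm_num)
    · exact hk
  obtain ⟨K, rfl⟩ : ∃ K, k = K + 1 := ⟨k - 1, (Nat.succ_pred_eq_of_pos hk).symm⟩
  revert P i
  generalize hd_def : Finset.univ.lcm w = d
  intro P hP i
  have hwd : ∀ i, w i ∣ d := fun i => hd_def ▸ Finset.dvd_lcm (Finset.mem_univ i)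
  have hd : 0 < d := by
    refine Nat.pos_of_ne_zero fun h0 => ?_
    rw [← hd_def, Finset.lcm_eq_zero_iff] at h0
    obtain ⟨j, -, hj⟩ := h0
    exact (hw j).ne' hj
  haveI : NeZero d := ⟨hd.ne'⟩
  set e := fun i => d / w i with he_def
  have hew : ∀ i, e i * w i = d := fun i => Nat.div_mul_cancel (hwd i)
  have he : ∀ i, 0 < e i := by
    intro i
    rcases Nat.eq_zero_or_pos (e i) with h0 | h
    · exfalso; have := hew i; rw [h0] at this; simp at this; omega
    · exact h
  haveI inst : ∀ i, NeZero (e i) := fun i => ⟨(he i).ne'⟩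
  -- the group hom
  let ψ : ∀ i, ZMod (e i) →+ ZMod d := fun i => ZMod.lift (e i)
    ⟨(zmultiplesHom (ZMod d)) ((w i : ℕ) : ZMod d), by
      show ((e i : ℤ)) • ((w i : ℕ) : ZMod d) = 0
      rw [zsmul_eq_mul]
      push_cast
      rw [← Nat.cast_mul, hew i, ZMod.natCast_self]⟩
  let φ : (∀ i, ZMod (e i)) →+ ZMod d :=
    ∑ i : Fin (K+1), (ψ i).comp (Pi.evalAddMonoidHom (fun i => ZMod (e i)) i)
  have hψ : ∀ (i : Fin (K+1)) (x : ℤ), ψ i ((x : ℤ) : ZMod (e i)) = x • ((w i : ℕ) : ZMod d) := by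
    intro i x
    exact ZMod.lift_coe (e i) _ x
  have hφ : ∀ r : (∀ i, ZMod (e i)), φ r = ((∑ i, (r i).val * w i : ℕ) : ZMod d) := by
    intro r
    have h1 : φ r = ∑ i, ψ i (r i) := by
      simp [φ, AddMonoidHom.finset_sum_apply, Pi.evalAddMonoidHom]
    rw [h1, Nat.cast_sum]
    refine Finset.sum_congr rfl fun j _ => ?_
    have h2 : r j = (((r j).val : ℤ) : ZMod (e j)) := by
      push_cast
      rw [ZMod.natCast_val, ZMod.cast_id]
    conv_lhs => rw [h2, hψ j, zsmul_eq_mul]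
    rw [Nat.cast_mul]
    norm_cast
  obtain ⟨c, hc⟩ := bezout' Finset.univ w
  rw [hgcd] at hc
  have hsurj : Function.Surjective φ := by
    have h1 : φ (fun i => ((c i : ℤ) : ZMod (e i))) = 1 := by
      have h2 : φ (fun i => ((c i : ℤ) : ZMod (e i))) = ∑ i, ψ i ((c i : ℤ) : ZMod (e i)) := by
        simp [φ, AddMonoidHom.finset_sum_apply, Pi.evalAddMonoidHom]
      rw [h2]
      have h3 : ∀ i ∈ Finset.univ, ψ i ((c i : ℤ) : ZMod (e i))
          = ((c i * (w i : ℤ) : ℤ) : ZMod d) := by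
        intro i _
        rw [hψ i, zsmul_eq_mul]; push_cast; ring
      rw [Finset.sum_congr rfl h3, ← Int.cast_sum, hc]
      norm_num
    intro y
    refine ⟨y.val • (fun i => ((c i : ℤ) : ZMod (e i))), ?_⟩
    rw [map_nsmul, h1]
    rw [nsmul_eq_mul, mul_one]
    exact ZMod.natCast_rightInverse y
  have hcard : ∀ y : ZMod d, Nat.card {r : ∀ i, ZMod (e i) // φ r = y} * d = ∏ i, e i := by
    have htrans : ∀ y : ZMod d,
        Nat.card {r : ∀ i, ZMod (e i) // φ r = y}
          = Nat.card {r : ∀ i, ZMod (e i) // φ r = 0} := by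
      intro y
      obtain ⟨r₀, hr₀⟩ := hsurj y
      exact Nat.card_congr ⟨fun x => ⟨x.1 - r₀, by rw [map_sub, x.2, hr₀, sub_self]⟩,
        fun x => ⟨x.1 + r₀, by rw [map_add, x.2, hr₀, zero_add]⟩,
        fun x => by ext1; simp, fun x => by ext1; simp⟩
    intro y
    have hA : Nat.card (∀ i, ZMod (e i)) = ∏ i, e i := by
      rw [Nat.card_pi]
      exact Finset.prod_congr rfl fun j _ => Nat.card_zmod _
    have hsig : Nat.card (Σ y : ZMod d, {r : ∀ i, ZMod (e i) // φ r = y})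
        = Nat.card (∀ i, ZMod (e i)) := Nat.card_congr (Equiv.sigmaFiberEquiv φ)
    rw [nat_card_sigma] at hsig
    rw [Finset.sum_congr rfl (fun y' _ => htrans y'), Finset.sum_const, Finset.card_univ]
    at hsig
    rw [htrans y, ← hA, ← hsig, smul_eq_mul, ZMod.card]
    ring
  -- residue value and polynomial
  set v := i.val with hv_def
  have hvlt : v < d := ZMod.val_lt i
  have hvcast : ((v : ℕ) : ZMod d) = i := ZMod.natCast_rightInverse i
  have hsB : ∀ r : (∀ j, ZMod (e j)), (∑ j, (r j).val * w j) ≤ (K+1) * d := by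
    intro r
    calc ∑ j, (r j).val * w j ≤ ∑ _j : Fin (K+1), d := Finset.sum_le_sum (fun j _ => le_of_lt (by
          calc (r j).val * w j < e j * w j := (Nat.mul_lt_mul_right (hw j)).mpr (ZMod.val_lt (r j))
            _ = d := hew j))
      _ = (K+1) * d := by rw [Finset.sum_const, Finset.card_univ, Fintype.card_fin, smul_eq_mul]
  set F : Finset (∀ j, ZMod (e j)) :=
    Finset.univ.filter (fun r => (∑ j, (r j).val * w j) % d = v) with hF_def
  set u : ℚ := (d : ℚ)⁻¹ with hu_def
  have hdq : (d : ℚ) ≠ 0 := Nat.cast_ne_zero.mpr hd.ne'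
  have hu0 : u ≠ 0 := inv_ne_zero hdq
  have hfacq : ((K.factorial : ℚ)) ≠ 0 := Nat.cast_ne_zero.mpr K.factorial_ne_zero
  set Q : Polynomial ℚ := ∑ r ∈ F, (Polynomial.C ((K.factorial : ℚ))⁻¹ *
    ∏ j ∈ Finset.range K,
      (Polynomial.C u * Polynomial.X +
        Polynomial.C (((j:ℚ) + 1) - (∑ t, (r t).val * w t) * u))) with hQ_def
  have hQeval : ∀ n : ℕ, (K+1) * d ≤ n → n % d = v → Q.eval (n : ℚ) = (hilbFn (K+1) w n : ℚ) := by
    intro n hn hnv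
    rw [hilb_decomp (K+1) w d hd (fun j => hew j) n, Nat.cast_sum]
    have step1 : ∀ r : (∀ j, ZMod (e j)),
        ((Nat.card {c : Fin (K+1) → ℕ // (∑ t, (r t).val * w t) + d * ∑ t, c t = n} : ℕ) : ℚ)
        = if (∑ t, (r t).val * w t) % d = v
            then (((K+1) + (n - ∑ t, (r t).val * w t)/d - 1).choose
              ((n - ∑ t, (r t).val * w t)/d) : ℚ)
            else 0 := by
      intro r
      rw [fiber_count (K+1) _ d n hd]
      have hle : (∑ t, (r t).val * w t) ≤ n := le_trans (hsB r) hn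
      by_cases hcase : (∑ t, (r t).val * w t) % d = v
      · rw [if_pos ⟨hle, by rw [hnv, hcase]⟩]
        rw [if_pos hcase]
      · rw [if_neg (fun hand => hcase (by rw [hand.2, hnv])), if_neg hcase, Nat.cast_zero]
    rw [Finset.sum_congr rfl (fun r _ => step1 r), ← Finset.sum_filter, ← hF_def, hQ_def,
      Polynomial.eval_finset_sum]
    refine Finset.sum_congr rfl fun r hr => ?_
    have hrc : (∑ t, (r t).val * w t) % d = v := by
      rw [hF_def] at hr
      exact (Finset.mem_filter.mp hr).2
    have hle : (∑ t, (r t).val * w t) ≤ n := le_trans (hsB r) hn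
    have hdvd : d ∣ n - (∑ t, (r t).val * w t) :=
      (Nat.modEq_iff_dvd' hle).mp (by rw [Nat.ModEq, hrc, hnv])
    have hM : (((n - (∑ t, (r t).val * w t))/d : ℕ) : ℚ)
        = ((n:ℚ) - ((∑ t, (r t).val * w t : ℕ) : ℚ)) * u := by
      rw [Nat.cast_div hdvd hdq, Nat.cast_sub hle, hu_def, div_eq_mul_inv]
    rw [Polynomial.eval_mul, Polynomial.eval_C, Polynomial.eval_prod, choose_eq_q]
    congr 1
    refine Finset.prod_congr rfl fun j _ => ?_
    rw [Polynomial.eval_add, Polynomial.eval_mul, Polynomial.eval_C, Polynomial.eval_X,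
      Polynomial.eval_C, hM]
    ring
  have hPQ : P i = Q := by
    obtain ⟨N, hN⟩ := hP
    have key : ∀ m : ℕ, (P i - Q).IsRoot ((v + (N + (K+1) * d + m) * d : ℕ) : ℚ) := by
      intro m
      set n := v + (N + (K+1) * d + m) * d with hn_def
      have hmul : N + (K+1) * d + m ≤ (N + (K+1) * d + m) * d := Nat.le_mul_of_pos_right _ hd
      have h1 : n % d = v := by
        rw [hn_def, Nat.add_mul_mod_self_right, Nat.mod_eq_of_lt hvlt]
      have h2 : ((n : ℕ) : ZMod d) = i := by
        rw [hn_def]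
        push_cast [ZMod.natCast_self]
        simp [hvcast]
      have hn1 : N ≤ n := by omega
      have hn2 : (K+1) * d ≤ n := by omega
      have hPn := hN n hn1
      rw [h2] at hPn
      simp only [Polynomial.IsRoot, Polynomial.eval_sub, hPn, hQeval n hn2 h1, sub_self]
    have hinf : Set.Infinite {x : ℚ | (P i - Q).IsRoot x} := by
      apply Set.infinite_of_injective_forall_mem
        (f := fun m : ℕ => ((v + (N + (K+1) * d + m) * d : ℕ) : ℚ))
      · intro a b hab
        have h3 := Nat.cast_inj (R := ℚ) |>.mp hab
        have h4 : (N + (K+1)*d + a) * d = (N + (K+1)*d + b) * d := by omega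
        have h5 := Nat.eq_of_mul_eq_mul_right hd h4
        omega
      · exact key
    have h0 := Polynomial.eq_zero_of_infinite_isRoot _ hinf
    exact sub_eq_zero.mp h0
  -- degrees and leading coefficients
  have hlin_ne : ∀ b : ℚ, (Polynomial.C u * Polynomial.X + Polynomial.C b) ≠ 0 := by
    intro b h0
    have := Polynomial.natDegree_linear (b := b) hu0
    rw [h0] at this
    simp at this
  have hq_deg : ∀ r : (∀ j, ZMod (e j)), (Polynomial.C ((K.factorial : ℚ))⁻¹ *
      ∏ j ∈ Finset.range K,
        (Polynomial.C u * Polynomial.X +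
          Polynomial.C (((j:ℚ) + 1) - (∑ t, (r t).val * w t) * u))).natDegree = K := by
    intro r
    rw [Polynomial.natDegree_mul (Polynomial.C_ne_zero.mpr (inv_ne_zero hfacq))
      (Finset.prod_ne_zero_iff.mpr (fun j _ => hlin_ne _)),
      Polynomial.natDegree_C, Polynomial.natDegree_prod _ _ (fun j _ => hlin_ne _)]
    rw [Finset.sum_congr rfl (fun j _ => Polynomial.natDegree_linear hu0), Finset.sum_const,
      Finset.card_range, smul_eq_mul, mul_one, zero_add]
  have hq_lead : ∀ r : (∀ j, ZMod (e j)), (Polynomial.C ((K.factorial : ℚ))⁻¹ *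
      ∏ j ∈ Finset.range K,
        (Polynomial.C u * Polynomial.X +
          Polynomial.C (((j:ℚ) + 1) - (∑ t, (r t).val * w t) * u))).leadingCoeff
      = (K.factorial : ℚ)⁻¹ * u ^ K := by
    intro r
    rw [Polynomial.leadingCoeff_mul, Polynomial.leadingCoeff_C, Polynomial.leadingCoeff_prod]
    congr 1
    rw [Finset.prod_congr rfl (fun j _ => Polynomial.leadingCoeff_linear hu0),
      Finset.prod_const, Finset.card_range]
  have hQdeg_le : Q.natDegree ≤ K := by
    rw [hQ_def]
    exact Polynomial.natDegree_sum_le_of_forall_le F _ (fun r _ => le_of_eq (hq_deg r))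
  have hQcoeff : Q.coeff K = (F.card : ℚ) * ((K.factorial : ℚ)⁻¹ * u ^ K) := by
    have hck : ∀ (p : Polynomial ℚ), p.natDegree = K → p.coeff K = p.leadingCoeff := by
      intro p hp; rw [← hp, Polynomial.coeff_natDegree]
    rw [hQ_def, Polynomial.finset_sum_coeff]
    rw [Finset.sum_congr rfl (fun r _ => by rw [hck _ (hq_deg r), hq_lead r])]
    rw [Finset.sum_const, nsmul_eq_mul]
  -- cardinality of F
  have hFcard : F.card * d = ∏ j, e j := by
    have h1 : Nat.card {r : ∀ j, ZMod (e j) // (∑ t, (r t).val * w t) % d = v} = F.card := by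
      rw [Nat.card_eq_fintype_card, Fintype.card_subtype, hF_def]
    have h2 : Nat.card {r : ∀ j, ZMod (e j) // (∑ t, (r t).val * w t) % d = v}
        = Nat.card {r : ∀ j, ZMod (e j) // φ r = i} := by
      refine Nat.card_congr (Equiv.subtypeEquivRight fun r => ?_)
      rw [hφ r, ← hvcast, ZMod.natCast_eq_natCast_iff']
      rw [Nat.mod_eq_of_lt hvlt]
    rw [← h1, h2]
    exact hcard i
  have hFne : F.Nonempty := by
    obtain ⟨r₁, hr₁⟩ := hsurj i
    refine ⟨r₁, ?_⟩
    rw [hF_def, Finset.mem_filter]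
    refine ⟨Finset.mem_univ _, ?_⟩
    have h3 : ((∑ t, (r₁ t).val * w t : ℕ) : ZMod d) = i := by rw [← hφ r₁]; exact hr₁
    have h4 := congrArg ZMod.val h3
    rwa [ZMod.val_natCast] at h4
  have hFpos : (0:ℚ) < F.card := by exact_mod_cast Finset.card_pos.mpr hFne
  have hcoeff_ne : Q.coeff K ≠ 0 := by
    rw [hQcoeff]
    exact mul_ne_zero hFpos.ne' (mul_ne_zero (inv_ne_zero hfacq) (pow_ne_zero _ hu0))
  have hQdeg : Q.natDegree = K :=
    le_antisymm hQdeg_le (Polynomial.le_natDegree_of_ne_zero hcoeff_ne)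
  have hQlead : Q.leadingCoeff = (F.card : ℚ) * ((K.factorial : ℚ)⁻¹ * u ^ K) := by
    rw [Polynomial.leadingCoeff, hQdeg, hQcoeff]
  -- final computation
  have hwq : (∏ j, (w j : ℚ)) ≠ 0 :=
    Finset.prod_ne_zero_iff.mpr (fun j _ => Nat.cast_ne_zero.mpr (hw j).ne')
  have hFdQ : (F.card : ℚ) * d = ∏ j, (e j : ℚ) := by
    exact_mod_cast congrArg (fun x : ℕ => (x : ℚ)) hFcard
  have hEWQ : (∏ j, (e j : ℚ)) * ∏ j, (w j : ℚ) = (d:ℚ)^(K+1) := by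
    have h5 : ∏ j, (e j * w j) = d ^ (K+1) := by
      rw [Finset.prod_congr rfl (fun j _ => hew j)]
      rw [Finset.prod_const, Finset.card_univ, Fintype.card_fin]
    have := congrArg (fun x : ℕ => (x : ℚ)) h5
    push_cast at this
    rw [← Finset.prod_mul_distrib]
    exact this
  have h6 : (F.card : ℚ) * (∏ j, (w j:ℚ)) = (d:ℚ)^K := by
    apply mul_right_cancel₀ hdq
    calc (F.card : ℚ) * (∏ j, (w j:ℚ)) * d = ((F.card : ℚ) * d) * ∏ j, (w j:ℚ) := by ring
      _ = (∏ j, (e j:ℚ)) * ∏ j, (w j:ℚ) := by rw [hFdQ]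
      _ = (d:ℚ)^(K+1) := hEWQ
      _ = (d:ℚ)^K * d := by ring
  constructor
  · rw [hPQ, hQdeg]; omega
  · rw [hPQ, hQlead]
    rw [show (K + 1 - 1) = K by omega]
    rw [hu_def]
    rw [eq_div_iff (mul_ne_zero hfacq hwq)]
    calc (F.card : ℚ) * ((K.factorial : ℚ)⁻¹ * ((d:ℚ)⁻¹) ^ K) * ((K.factorial : ℚ) * ∏ j, (w j:ℚ))
        = ((F.card : ℚ) * ∏ j, (w j:ℚ)) * (((d:ℚ)⁻¹)^K * ((K.factorial : ℚ)⁻¹ * (K.factorial : ℚ))) := by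
          ring
      _ = (d:ℚ)^K * (((d:ℚ)⁻¹)^K * 1) := by rw [h6, inv_mul_cancel₀ hfacq]
      _ = ((d:ℚ) * (d:ℚ)⁻¹)^K := by rw [mul_one, mul_pow]
      _ = 1 := by rw [mul_inv_cancel₀ hdq, one_pow]
end

section
/- Let R = K[x_1,...,x_k] with k ≥ 1 be graded by W = [d_1,...,d_k], and let I be a nonzero W-homogeneous ideal of R. Then every polynomial P_i of the Hilbert quasi-polynomial of R/I has degree at most k−2. -/
/-- The Hilbert function of `(K[x_1,…,x_k]/I, W)`: the `K`-dimension of the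
`n`-th graded component of the quotient, realized as the image in `R/I` of the
space of `W`-homogeneous polynomials of weighted degree `n`. -/
noncomputable def quotHilbFn (k : ℕ) (K : Type) [Field K] (w : Fin k → ℕ)
    (I : Ideal (MvPolynomial (Fin k) K)) (n : ℕ) : ℕ :=
  Module.finrank K ((MvPolynomial.weightedHomogeneousSubmodule K w n).map
    (Ideal.Quotient.mkₐ K I).toLinearMap)

open MvPolynomial Polynomial

namespace Stmt8Aux

/-- Growth bound forces degree bound. -/
lemma degree_le_of_eval_le (p : Polynomial ℚ) (m : ℕ) (C : ℚ)
    (h : ∀ N : ℕ, ∃ n : ℕ, N ≤ n ∧ 0 ≤ p.eval (n : ℚ) ∧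
      p.eval (n : ℚ) ≤ C * ((n : ℚ) + 1) ^ m) :
    p.degree ≤ (m : WithBot ℕ) := by
  by_contra hdeg
  push_neg at hdeg
  have hp0 : p ≠ 0 := by
    intro h0
    rw [h0, Polynomial.degree_zero] at hdeg
    exact (not_lt_bot hdeg)
  have hdegpos : 0 < p.degree := by
    refine lt_of_le_of_lt ?_ hdeg
    exact_mod_cast Nat.zero_le m
  rcases lt_trichotomy p.leadingCoeff 0 with hlc | hlc | hlc
  · -- p → -∞ but p takes nonneg values at arbitrarily large n
    have ht := Polynomial.tendsto_atBot_of_leadingCoeff_nonpos p hdegpos hlc.le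
    have hev : ∀ᶠ x : ℚ in Filter.atTop, p.eval x ≤ -1 := ht.eventually_le_atBot (-1)
    rw [Filter.eventually_atTop] at hev
    obtain ⟨a, ha⟩ := hev
    obtain ⟨n, hn, h0, _⟩ := h ⌈a⌉₊
    have han : a ≤ (n : ℚ) := le_trans (Nat.le_ceil a) (by exact_mod_cast hn)
    have := ha n han
    linarith
  · exact hp0 (Polynomial.leadingCoeff_eq_zero.mp hlc)
  · -- q = p - C (X+1)^m → +∞ but q ≤ 0 at arbitrarily large n
    set q : Polynomial ℚ := p - Polynomial.C C * (Polynomial.X + 1) ^ m with hq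
    have hdegXm : (Polynomial.C C * (Polynomial.X + 1) ^ m).degree < p.degree := by
      refine lt_of_le_of_lt ?_ hdeg
      refine le_trans (Polynomial.degree_le_natDegree) ?_
      have : (Polynomial.C C * (Polynomial.X + 1) ^ m).natDegree ≤ m := by
        refine le_trans (Polynomial.natDegree_mul_le) ?_
        simp [Polynomial.natDegree_pow]
        refine le_trans (Nat.mul_le_mul_left m (Polynomial.natDegree_add_le _ _)) ?_
        simp
      exact_mod_cast this
    have hqdeg : q.degree = p.degree := Polynomial.degree_sub_eq_left_of_degree_lt hdegXm
    have hqlc : q.leadingCoeff = p.leadingCoeff :=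
      Polynomial.leadingCoeff_sub_of_degree_lt hdegXm
    have ht := Polynomial.tendsto_atTop_of_leadingCoeff_nonneg q
      (by rw [hqdeg]; exact hdegpos) (by rw [hqlc]; exact hlc.le)
    have hev : ∀ᶠ x : ℚ in Filter.atTop, (1 : ℚ) ≤ q.eval x := ht.eventually_ge_atTop 1
    rw [Filter.eventually_atTop] at hev
    obtain ⟨a, ha⟩ := hev
    obtain ⟨n, hn, _, hle⟩ := h ⌈a⌉₊
    have han : a ≤ (n : ℚ) := le_trans (Nat.le_ceil a) (by exact_mod_cast hn)
    have h1 := ha n han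
    have : q.eval (n : ℚ) = p.eval (n : ℚ) - C * ((n : ℚ) + 1) ^ m := by
      simp [hq]
    linarith

variable {k : ℕ} {K : Type} [Field K]

lemma weight_single (w : Fin k → ℕ) (z : Fin k) (e : ℕ) :
    Finsupp.weight w (Finsupp.single z e) = e * w z := by
  rw [Finsupp.weight_apply, Finsupp.sum_single_index] <;> simp

lemma weight_eq_sum (w : Fin k → ℕ) (d : Fin k →₀ ℕ) :
    Finsupp.weight w d = ∑ i : Fin k, d i * w i := by
  rw [Finsupp.weight_apply, Finsupp.sum_fintype]
  · simp [smul_eq_mul]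
  · intro i; simp

lemma coord_le_of_weight_eq {w : Fin k → ℕ} (hw : ∀ i, 0 < w i) {n : ℕ} {d : Fin k →₀ ℕ}
    (hd : Finsupp.weight w d = n) (i : Fin k) : d i ≤ n := by
  have := Finsupp.le_weight w (s := i) (hw i).ne' d
  omega

lemma finite_A (w : Fin k → ℕ) (hw : ∀ i, 0 < w i) (n : ℕ) :
    {d : Fin k →₀ ℕ | Finsupp.weight w d = n}.Finite := by
  refine Set.Finite.subset (Finsupp.finite_of_nat_weight_le w (fun i => (hw i).ne') n) ?_
  intro d hd
  simp only [Set.mem_setOf_eq] at hd ⊢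
  omega

lemma pow_weighted_homog {w : Fin k → ℕ} {g : MvPolynomial (Fin k) K} {e : ℕ}
    (hg : IsWeightedHomogeneous w g e) (t : ℕ) :
    IsWeightedHomogeneous w (g ^ t) (t * e) := by
  induction t with
  | zero => simpa using isWeightedHomogeneous_one K w
  | succ t ih =>
      have := ih.mul hg
      rw [pow_succ]
      convert this using 1
      ring

/-- finite dimensionality of graded pieces -/
lemma findim_piece (w : Fin k → ℕ) (hw : ∀ i, 0 < w i) (n : ℕ) :
    FiniteDimensional K (weightedHomogeneousSubmodule K w n) := by
  rw [weightedHomogeneousSubmodule_eq_finsupp_supported]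
  haveI : Finite {d : Fin k →₀ ℕ | Finsupp.weight w d = n} := (finite_A w hw n).to_subtype
  haveI : Fintype {d : Fin k →₀ ℕ | Finsupp.weight w d = n} := Fintype.ofFinite _
  exact Module.Finite.of_basis (MvPolynomial.basisRestrictSupport K _)

lemma finrank_piece (w : Fin k → ℕ) (hw : ∀ i, 0 < w i) (n : ℕ) :
    Module.finrank K (weightedHomogeneousSubmodule K w n) =
      Nat.card {d : Fin k →₀ ℕ | Finsupp.weight w d = n} := by
  rw [weightedHomogeneousSubmodule_eq_finsupp_supported]
  haveI : Finite {d : Fin k →₀ ℕ | Finsupp.weight w d = n} := (finite_A w hw n).to_subtype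
  haveI : Fintype {d : Fin k →₀ ℕ | Finsupp.weight w d = n} := Fintype.ofFinite _
  exact (Module.finrank_eq_card_basis (MvPolynomial.basisRestrictSupport K _)).trans
    (Nat.card_eq_fintype_card).symm

/-- The key algebraic bound. -/
lemma key_bound (w : Fin k → ℕ) (hw : ∀ i, 0 < w i) (I : Ideal (MvPolynomial (Fin k) K))
    (g : MvPolynomial (Fin k) K) (e : ℕ) (hgI : g ∈ I) (hg0 : g ≠ 0)
    (hge : IsWeightedHomogeneous w g e) (z : Fin k) (n : ℕ) (hn : e * w z ≤ n) :
    quotHilbFn k K w I n ≤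
      ({d : Fin k →₀ ℕ | Finsupp.weight w d = n ∧ d z < e} : Set (Fin k →₀ ℕ)).ncard := by
  classical
  haveI := findim_piece (K := K) w hw n
  set S := weightedHomogeneousSubmodule K w n with hS
  set f : MvPolynomial (Fin k) K →ₗ[K] _ := (Ideal.Quotient.mkₐ K I).toLinearMap with hf
  -- rank nullity
  have h1 : Module.finrank K (S.map f) + Module.finrank K (LinearMap.ker (f ∘ₗ S.subtype)) =
      Module.finrank K S := by
    have := LinearMap.finrank_range_add_finrank_ker (f ∘ₗ S.subtype)
    rwa [LinearMap.range_comp, Submodule.range_subtype] at this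
  -- multiplication by g^(w z) : S_{n - e * w z} → ker
  have hh : IsWeightedHomogeneous w (g ^ w z) (e * w z) := by
    have := pow_weighted_homog hge (w z)
    rwa [mul_comm] at this
  have hh0 : (g : MvPolynomial (Fin k) K) ^ w z ≠ 0 := pow_ne_zero _ hg0
  have hhI : g ^ w z ∈ I := I.pow_mem_of_mem hgI (w z) (hw z)
  have hmem : ∀ x : MvPolynomial (Fin k) K,
      x ∈ weightedHomogeneousSubmodule K w (n - e * w z) → g ^ w z * x ∈ S := by
    intro x hx
    rw [hS, mem_weightedHomogeneousSubmodule]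
    have := hh.mul hx
    rwa [Nat.add_sub_cancel' hn] at this
  have hker : ∀ (x : MvPolynomial (Fin k) K)
      (hxS : g ^ w z * x ∈ S),
      (⟨g ^ w z * x, hxS⟩ : S) ∈ LinearMap.ker (f ∘ₗ S.subtype) := by
    intro x hxS
    simp only [LinearMap.mem_ker, LinearMap.comp_apply, Submodule.coe_subtype]
    show f (g ^ w z * x) = 0
    simp only [hf, AlgHom.toLinearMap_apply, Ideal.Quotient.mkₐ_eq_mk]
    rw [Ideal.Quotient.eq_zero_iff_mem]
    exact I.mul_mem_right x hhI
  let Φ : weightedHomogeneousSubmodule K w (n - e * w z) →ₗ[K]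
      LinearMap.ker (f ∘ₗ S.subtype) :=
    { toFun := fun x => ⟨⟨g ^ w z * x.1, hmem x.1 x.2⟩, hker x.1 (hmem x.1 x.2)⟩
      map_add' := by
        intro x y
        apply Subtype.ext; apply Subtype.ext
        simp [mul_add]
      map_smul' := by
        intro c x
        apply Subtype.ext; apply Subtype.ext
        simp [mul_smul_comm] }
  have hΦinj : Function.Injective Φ := by
    intro x y hxy
    have h1 : g ^ w z * (x.1 : MvPolynomial (Fin k) K) = g ^ w z * y.1 :=
      Subtype.ext_iff.mp (Subtype.ext_iff.mp hxy)
    exact Subtype.ext (mul_left_cancel₀ hh0 h1)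
  have h2 : Module.finrank K (weightedHomogeneousSubmodule K w (n - e * w z)) ≤
      Module.finrank K (LinearMap.ker (f ∘ₗ S.subtype)) :=
    LinearMap.finrank_le_finrank_of_injective hΦinj
  -- monomial counting
  have hcard : Nat.card {d : Fin k →₀ ℕ | Finsupp.weight w d = n} ≤
      Nat.card {d : Fin k →₀ ℕ | Finsupp.weight w d = n - e * w z} +
      ({d : Fin k →₀ ℕ | Finsupp.weight w d = n ∧ d z < e} : Set (Fin k →₀ ℕ)).ncard := by
    have hsub : {d : Fin k →₀ ℕ | Finsupp.weight w d = n} ⊆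
        ((fun d : Fin k →₀ ℕ => d + Finsupp.single z e) ''
          {d | Finsupp.weight w d = n - e * w z}) ∪
        {d | Finsupp.weight w d = n ∧ d z < e} := by
      intro d hd
      simp only [Set.mem_setOf_eq] at hd
      by_cases hz : d z < e
      · exact Or.inr ⟨hd, hz⟩
      · push_neg at hz
        left
        have hle : Finsupp.single z e ≤ d := Finsupp.single_le_iff.mpr hz
        have hsum : d - Finsupp.single z e + Finsupp.single z e = d :=
          tsub_add_cancel_of_le hle
        refine ⟨d - Finsupp.single z e, ?_, hsum⟩
        have := congrArg (Finsupp.weight w) hsum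
        rw [map_add, weight_single] at this
        simp only [Set.mem_setOf_eq]
        omega
    have hfin1 : ({d : Fin k →₀ ℕ | Finsupp.weight w d = n - e * w z}).Finite :=
      finite_A w hw _
    have hfin2 : ({d : Fin k →₀ ℕ | Finsupp.weight w d = n ∧ d z < e}).Finite :=
      (finite_A w hw n).subset (fun d hd => hd.1)
    calc Nat.card {d : Fin k →₀ ℕ | Finsupp.weight w d = n}
        = ({d : Fin k →₀ ℕ | Finsupp.weight w d = n}).ncard := Nat.card_coe_set_eq _
      _ ≤ ((fun d : Fin k →₀ ℕ => d + Finsupp.single z e) ''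
            {d | Finsupp.weight w d = n - e * w z}).ncard +
          ({d : Fin k →₀ ℕ | Finsupp.weight w d = n ∧ d z < e}).ncard :=
          le_trans (Set.ncard_le_ncard hsub ((hfin1.image _).union hfin2))
            (Set.ncard_union_le _ _)
      _ ≤ ({d : Fin k →₀ ℕ | Finsupp.weight w d = n - e * w z}).ncard +
          ({d : Fin k →₀ ℕ | Finsupp.weight w d = n ∧ d z < e}).ncard :=
          Nat.add_le_add_right (Set.ncard_image_le hfin1) _
      _ = _ := by rw [Nat.card_coe_set_eq]
  -- combine
  have hq : quotHilbFn k K w I n = Module.finrank K (S.map f) := rfl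
  rw [hq]
  have e1 := finrank_piece (K := K) w hw n
  have e2 := finrank_piece (K := K) w hw (n - e * w z)
  rw [← hS] at e1
  omega

/-- Counting bound for `k ≥ 2`. -/
lemma B_bound (w : Fin k → ℕ) (hw : ∀ i, 0 < w i) (hk2 : 2 ≤ k) (e n : ℕ) :
    ({d : Fin k →₀ ℕ | Finsupp.weight w d = n ∧ d ⟨0, by omega⟩ < e} :
      Set (Fin k →₀ ℕ)).ncard ≤ e * (n + 1) ^ (k - 2) := by
  classical
  set z : Fin k := ⟨0, by omega⟩ with hz
  set B := {d : Fin k →₀ ℕ | Finsupp.weight w d = n ∧ d z < e} with hB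
  let ψ : B → Fin e × (Fin (k - 2) → Fin (n + 1)) := fun d =>
    (⟨d.1 z, d.2.2⟩,
     fun j => ⟨d.1 ⟨j.1 + 1, by omega⟩,
       Nat.lt_succ_of_le (coord_le_of_weight_eq hw d.2.1 _)⟩)
  have hψ : Function.Injective ψ := by
    intro d d' h
    have h1 : d.1 z = d'.1 z := congrArg (fun u => (u.1 : ℕ)) h
    have h2 : ∀ j : Fin (k - 2), d.1 ⟨j.1 + 1, by omega⟩ = d'.1 ⟨j.1 + 1, by omega⟩ := by
      intro j
      exact congrArg (fun u => (u.2 j : ℕ)) h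
    have haux : ∀ t : Fin k, t.1 ≠ k - 1 → d.1 t = d'.1 t := by
      intro t ht
      have htlt : t.1 < k := t.2
      rcases Nat.eq_zero_or_pos t.1 with h0 | hpos
      · have : t = z := Fin.ext (show t.1 = (0 : ℕ) from h0)
        rw [this]; exact h1
      · have htk : t.1 - 1 < k - 2 := by omega
        have h3 := h2 ⟨t.1 - 1, htk⟩
        have heq : (⟨t.1 - 1 + 1, by omega⟩ : Fin k) = t :=
          Fin.ext (show t.1 - 1 + 1 = t.1 by omega)
        rwa [heq] at h3
    apply Subtype.ext
    apply Finsupp.ext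
    intro t
    by_cases ht : t.1 = k - 1
    · -- last coordinate determined by the weight
      have hw1 : Finsupp.weight w d.1 = n := d.2.1
      have hw2 : Finsupp.weight w d'.1 = n := d'.2.1
      rw [weight_eq_sum] at hw1 hw2
      have hsum : ∑ i : Fin k, d.1 i * w i = ∑ i : Fin k, d'.1 i * w i := by rw [hw1, hw2]
      have herase : ∑ i ∈ Finset.univ.erase t, d.1 i * w i =
          ∑ i ∈ Finset.univ.erase t, d'.1 i * w i := by
        refine Finset.sum_congr rfl ?_
        intro i hi
        have hit : i ≠ t := Finset.ne_of_mem_erase hi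
        have : i.1 ≠ k - 1 := by
          intro hik
          exact hit (Fin.ext (by omega))
        rw [haux i this]
      have ht1 : ∑ i ∈ Finset.univ.erase t, d.1 i * w i + d.1 t * w t =
          ∑ i : Fin k, d.1 i * w i := Finset.sum_erase_add _ _ (Finset.mem_univ t)
      have ht2 : ∑ i ∈ Finset.univ.erase t, d'.1 i * w i + d'.1 t * w t =
          ∑ i : Fin k, d'.1 i * w i := Finset.sum_erase_add _ _ (Finset.mem_univ t)
      have : d.1 t * w t = d'.1 t * w t := by omega
      exact Nat.eq_of_mul_eq_mul_right (hw t) this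
    · exact haux t ht
  have hfin : B.Finite := (finite_A w hw n).subset (fun d hd => hd.1)
  haveI : Finite B := hfin.to_subtype
  have := Nat.card_le_card_of_injective ψ hψ
  rw [Nat.card_coe_set_eq] at this
  simpa using this

end Stmt8Aux

open Stmt8Aux

theorem stmt8 (k : ℕ) (hk : 1 ≤ k) (K : Type) [Field K]
    (w : Fin k → ℕ) (hw : ∀ i, 0 < w i) (hgcd : Finset.univ.gcd w = 1)
    (I : Ideal (MvPolynomial (Fin k) K)) (hI0 : I ≠ ⊥)
    (hIhom : ∀ f ∈ I, ∀ n : ℕ, MvPolynomial.weightedHomogeneousComponent w n f ∈ I)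
    (P : ZMod (Finset.univ.lcm w) → Polynomial ℚ)
    (hP : ∃ N : ℕ, ∀ n : ℕ, N ≤ n →
      (P (n : ZMod (Finset.univ.lcm w))).eval (n : ℚ) = quotHilbFn k K w I n)
    (i : ZMod (Finset.univ.lcm w)) :
    (P i).degree < ((k - 1 : ℕ) : WithBot ℕ) := by
  classical
  obtain ⟨N, hN⟩ := hP
  have hd0 : Finset.univ.lcm w ≠ 0 := by
    intro h
    rw [Finset.lcm_eq_zero_iff] at h
    obtain ⟨j, -, hj⟩ := h
    exact (hw j).ne' hj
  haveI : NeZero (Finset.univ.lcm w) := ⟨hd0⟩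
  have hd1 : 1 ≤ Finset.univ.lcm w := Nat.one_le_iff_ne_zero.mpr hd0
  -- a nonzero weighted-homogeneous element of I
  obtain ⟨f0, hf0I, hf00⟩ := Submodule.exists_mem_ne_zero_of_ne_bot hI0
  have hcomp : ∃ e : ℕ, MvPolynomial.weightedHomogeneousComponent w e f0 ≠ 0 := by
    by_contra hc
    push_neg at hc
    apply hf00
    have := MvPolynomial.finsum_weightedHomogeneousComponent (w := w) (φ := f0)
    rw [← this]
    simp [hc]
  obtain ⟨e, he⟩ := hcomp
  set g := MvPolynomial.weightedHomogeneousComponent w e f0 with hg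
  have hgI : g ∈ I := hIhom f0 hf0I e
  have hge : MvPolynomial.IsWeightedHomogeneous w g e :=
    MvPolynomial.weightedHomogeneousComponent_isWeightedHomogeneous (w := w) e f0
  set z : Fin k := ⟨0, by omega⟩ with hz
  have hkey : ∀ n : ℕ, e * w z ≤ n → quotHilbFn k K w I n ≤
      ({d : Fin k →₀ ℕ | Finsupp.weight w d = n ∧ d z < e} : Set (Fin k →₀ ℕ)).ncard :=
    fun n hn => key_bound w hw I g e hgI he hge z n hn
  -- points in the progression
  have hprog : ∀ j : ℕ, ((i.val + j * Finset.univ.lcm w : ℕ) : ZMod (Finset.univ.lcm w)) = i := by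
    intro j
    push_cast
    rw [ZMod.natCast_self, mul_zero, add_zero, ZMod.natCast_rightInverse i]
  rcases eq_or_lt_of_le hk with hk1 | hk2
  · -- k = 1 : show P i = 0
    have hwz : w z = 1 := by
      subst hk1
      have huniv : (Finset.univ : Finset (Fin 1)) = {z} := by
        apply Finset.eq_singleton_iff_unique_mem.mpr
        exact ⟨Finset.mem_univ z, fun x _ => Subsingleton.elim x z⟩
      rw [huniv, Finset.gcd_singleton] at hgcd
      simpa using hgcd
    have hempty : ∀ n : ℕ, e ≤ n →
        ({d : Fin k →₀ ℕ | Finsupp.weight w d = n ∧ d z < e} : Set (Fin k →₀ ℕ)) = ∅ := by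
      intro n hn
      subst hk1
      ext d
      simp only [Set.mem_setOf_eq, Set.mem_empty_iff_false, iff_false, not_and]
      intro hdn
      rw [weight_eq_sum] at hdn
      rw [Fin.sum_univ_one] at hdn
      have : (0 : Fin 1) = z := Subsingleton.elim _ _
      rw [this, hwz, mul_one] at hdn
      omega
    have hzero : ∀ n : ℕ, max N e ≤ n → (n : ZMod (Finset.univ.lcm w)) = i →
        (P i).eval (n : ℚ) = 0 := by
      intro n hn hni
      have h1 := hN n (le_trans (le_max_left _ _) hn)
      rw [hni] at h1
      rw [h1]
      have h2 : quotHilbFn k K w I n = 0 := by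
        have := hkey n (by rw [hwz]; omega)
        rw [hempty n (le_trans (le_max_right _ _) hn)] at this
        simpa using this
      rw [h2]; norm_num
    have hPi : P i = 0 := by
      apply Polynomial.eq_zero_of_infinite_isRoot
      refine Set.infinite_of_injective_forall_mem
        (f := fun j : ℕ => ((i.val + (j + max N e) * Finset.univ.lcm w : ℕ) : ℚ)) ?_ ?_
      · intro a b hab
        simp only at hab
        have : (i.val + (a + max N e) * Finset.univ.lcm w : ℕ) =
            (i.val + (b + max N e) * Finset.univ.lcm w : ℕ) := Nat.cast_injective hab
        have := Nat.eq_of_mul_eq_mul_right (Nat.lt_of_lt_of_le Nat.zero_lt_one hd1)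
          (by omega : (a + max N e) * Finset.univ.lcm w = (b + max N e) * Finset.univ.lcm w)
        omega
      · intro j
        have hn : max N e ≤ i.val + (j + max N e) * Finset.univ.lcm w := by
          have : max N e ≤ (j + max N e) * Finset.univ.lcm w :=
            le_trans (by omega) (Nat.le_mul_of_pos_right _ (by omega))
          omega
        exact hzero _ hn (hprog (j + max N e))
    rw [hPi, Polynomial.degree_zero]
    have : k - 1 = 0 := by omega
    rw [this]
    exact WithBot.bot_lt_coe 0
  · -- k ≥ 2
    have hk2' : 2 ≤ k := hk2
    have hdle : (P i).degree ≤ ((k - 2 : ℕ) : WithBot ℕ) := by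
      apply degree_le_of_eval_le (P i) (k - 2) (e : ℚ)
      intro N'
      set n : ℕ := i.val + (N' + N + e * w z) * Finset.univ.lcm w with hn
      have hge1 : N' + N + e * w z ≤ n := by
        have : N' + N + e * w z ≤ (N' + N + e * w z) * Finset.univ.lcm w :=
          Nat.le_mul_of_pos_right _ (by omega)
        omega
      refine ⟨n, by omega, ?_, ?_⟩
      · have h1 := hN n (by omega)
        rw [hprog (N' + N + e * w z)] at h1
        rw [h1]
        positivity
      · have h1 := hN n (by omega)
        rw [hprog (N' + N + e * w z)] at h1
        rw [h1]
        have h2 : quotHilbFn k K w I n ≤ e * (n + 1) ^ (k - 2) := by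
          refine le_trans (hkey n (by omega)) ?_
          exact B_bound w hw hk2' e n
        calc ((quotHilbFn k K w I n : ℚ)) ≤ ((e * (n + 1) ^ (k - 2) : ℕ) : ℚ) := by
              exact_mod_cast h2
          _ = (e : ℚ) * ((n : ℚ) + 1) ^ (k - 2) := by push_cast; ring
    refine lt_of_le_of_lt hdle ?_
    have h12 : k - 2 < k - 1 := by omega
    exact_mod_cast (by exact_mod_cast h12 : ((k - 2 : ℕ) : WithBot ℕ) < ((k - 1 : ℕ) : WithBot ℕ))
end

section
/- Let R = K[x_1,...,x_k] be graded by W = [d_1,...,d_k] with gcd 1, d = lcm(d_i), and δ = max{|I| : gcd(d_i)_{i∈I} ≠ 1}. Then the Hilbert quasi-polynomial satisfies P_R^W(x) = Q(x) + T(x), where Q ∈ ℚ[x] is a single polynomial of degree k−1 (independent of the residue class mod d) and T is a quasi-polynomial of degree at most δ−1. In particular, for each r with δ ≤ r ≤ k−1, the coefficient of x^r in P_i is the same for all i = 0,...,d−1. -/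
noncomputable section
namespace Stmt10Aux
open Polynomial Finset


open Polynomial Finset

abbrev V : Type := ℕ → ℚ

def S : Module.End ℚ V where
  toFun f := fun n => f (n+1)
  map_add' f g := rfl
  map_smul' c f := rfl

def op (p : ℚ[X]) : Module.End ℚ V := Polynomial.aeval S p

lemma op_mul (p q : ℚ[X]) (f : V) : op (p*q) f = op p (op q f) := by
  simp [op, map_mul, Module.End.mul_apply]

lemma op_one (f : V) : op 1 f = f := by simp [op]

lemma op_zero_fun (p : ℚ[X]) : op p (0 : V) = 0 := map_zero (op p)

lemma S_pow (e : ℕ) : ∀ (f : V) (n : ℕ), (S^e) f n = f (n + e) := by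
  induction e with
  | zero => intro f n; rfl
  | succ e ih =>
    intro f n
    rw [pow_succ, Module.End.mul_apply, ih]
    rfl

lemma op_X_pow (e : ℕ) (f : V) (n : ℕ) : op (X^e) f n = f (n + e) := by
  simp only [op, map_pow, Polynomial.aeval_X]
  exact S_pow e f n

lemma op_X_pow_sub_one (e : ℕ) (f : V) (n : ℕ) :
    op (X^e - 1) f n = f (n + e) - f n := by
  simp only [op, map_sub, map_one, LinearMap.sub_apply, Module.End.one_apply,
    Pi.sub_apply]
  rw [show ((aeval S) (X^e)) f n = f (n+e) from op_X_pow e f n]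


lemma op_sub_one (f : V) (n : ℕ) : op (X - 1) f n = f (n+1) - f n := by
  simp only [op, map_sub, map_one, LinearMap.sub_apply, aeval_X, Pi.sub_apply]
  rfl

lemma newton (f : V) (n : ℕ) :
    f n = ∑ j ∈ Finset.range (n+1), (n.choose j : ℚ) * op ((X - 1)^j) f 0 := by
  induction n generalizing f with
  | zero => simp [op_one, show ((X-1)^0 : ℚ[X]) = 1 from pow_zero _]
  | succ n ih =>
    have hstep : f (n+1) = f n + op (X - 1) f n := by
      rw [op_sub_one]; ring
    have h2 : ∀ j, op ((X-1)^j) (op (X - 1) f) = op ((X-1)^(j+1)) f := by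
      intro j
      rw [← op_mul, ← pow_succ]
    rw [hstep, ih f, ih (op (X - 1) f)]
    simp only [h2]
    -- goal: ∑_{range(n+1)} C(n,j) a j + ∑_{range(n+1)} C(n,j) a (j+1) = ∑_{range(n+2)} C(n+1,j) a j
    set a : ℕ → ℚ := fun j => op ((X-1)^j) f 0 with ha
    have key : ∑ j ∈ range (n+2), (((n+1).choose j : ℕ) : ℚ) * a j
        = ∑ j ∈ range (n+1), ((n.choose j : ℕ) : ℚ) * a j
          + ∑ j ∈ range (n+1), ((n.choose j : ℕ) : ℚ) * a (j+1) := by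
      rw [Finset.sum_range_succ' (fun j => (((n+1).choose j : ℕ) : ℚ) * a j) (n+1)]
      have : ∀ j ∈ range (n+1), (((n+1).choose (j+1) : ℕ) : ℚ) * a (j+1)
          = ((n.choose j : ℕ) : ℚ) * a (j+1) + ((n.choose (j+1) : ℕ) : ℚ) * a (j+1) := by
        intro j _
        rw [Nat.choose_succ_succ]
        push_cast
        ring
      rw [Finset.sum_congr rfl this, Finset.sum_add_distrib]
      have h3 : ∑ j ∈ range (n+1), ((n.choose (j+1) : ℕ) : ℚ) * a (j+1)
          + ((n.choose 0 : ℕ) : ℚ) * a 0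
          = ∑ j ∈ range (n+1), ((n.choose j : ℕ) : ℚ) * a j := by
        rw [Finset.sum_range_succ (fun j => ((n.choose (j+1) : ℕ) : ℚ) * a (j+1)) n,
          Nat.choose_succ_self,
          Finset.sum_range_succ' (fun j => ((n.choose j : ℕ) : ℚ) * a j) n]
        push_cast
        ring
      simp only [Nat.choose_zero_right] at h3 ⊢
      push_cast at h3 ⊢
      linarith
    linarith [key]

lemma op_ann_ge (Kk : ℕ) (f : V) (hf : op ((X-1)^Kk) f = 0) :
    ∀ j, Kk ≤ j → op ((X-1)^j) f = 0 := by
  intro j hj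
  have : ((X:ℚ[X])-1)^j = (X-1)^(j-Kk) * (X-1)^Kk := by
    rw [← pow_add]; congr 1; omega
  rw [this, op_mul, hf, map_zero]

/-- A sequence annihilated by `(S-1)^K` is given by a polynomial of degree `< K`. -/
lemma poly_of_ann (Kk : ℕ) (f : V) (hf : op ((X-1)^Kk) f = 0) :
    ∃ q : ℚ[X], q.degree < (Kk : WithBot ℕ) ∧ ∀ n : ℕ, f n = q.eval (n : ℚ) := by
  set c : ℕ → ℚ := fun j => op ((X-1)^j) f 0 with hc
  refine ⟨∑ j ∈ range Kk, Polynomial.C (c j / (j.factorial : ℚ)) * descPochhammer ℚ j, ?_, ?_⟩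
  · apply lt_of_le_of_lt (Polynomial.degree_sum_le _ _)
    rw [Finset.sup_lt_iff (by exact WithBot.bot_lt_coe _)]
    intro j hj
    apply lt_of_le_of_lt (Polynomial.degree_mul_le _ _)
    have h1 : (Polynomial.C (c j / (j.factorial : ℚ))).degree ≤ 0 := Polynomial.degree_C_le
    have h2 : (descPochhammer ℚ j).degree ≤ (j : WithBot ℕ) := by
      apply le_trans (Polynomial.degree_le_natDegree)
      rw [descPochhammer_natDegree]
    calc (Polynomial.C (c j / (j.factorial : ℚ))).degree + (descPochhammer ℚ j).degree
        ≤ 0 + (j : WithBot ℕ) := add_le_add h1 h2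
      _ = (j : WithBot ℕ) := by rw [zero_add]
      _ < (Kk : WithBot ℕ) := by
          exact_mod_cast WithBot.coe_lt_coe.mpr (Finset.mem_range.mp hj)
  · intro n
    have heval : ∀ j : ℕ, (Polynomial.C (c j / (j.factorial : ℚ)) * descPochhammer ℚ j).eval (n:ℚ)
        = (n.choose j : ℚ) * c j := by
      intro j
      rw [Polynomial.eval_mul, Polynomial.eval_C, descPochhammer_eval_eq_descFactorial,
        Nat.descFactorial_eq_factorial_mul_choose]
      have : (j.factorial : ℚ) ≠ 0 := by exact_mod_cast j.factorial_ne_zero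
      push_cast
      field_simp
    rw [Polynomial.eval_finset_sum, Finset.sum_congr rfl (fun j _ => heval j)]
    rw [newton f n]
    -- both sums: extend to range (max)
    have hbig : ∀ M : ℕ, n + 1 ≤ M →
        ∑ j ∈ range (n+1), (n.choose j : ℚ) * c j = ∑ j ∈ range M, (n.choose j : ℚ) * c j := by
      intro M hM
      apply Finset.sum_subset (Finset.range_subset_range.mpr hM)
      intro j _ hj
      rw [Finset.mem_range, not_lt] at hj
      have : n.choose j = 0 := Nat.choose_eq_zero_of_lt (by omega)
      rw [this]; push_cast; ring
    have hbig2 : ∀ M : ℕ, Kk ≤ M →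
        ∑ j ∈ range Kk, (n.choose j : ℚ) * c j = ∑ j ∈ range M, (n.choose j : ℚ) * c j := by
      intro M hM
      apply Finset.sum_subset (Finset.range_subset_range.mpr hM)
      intro j _ hj
      rw [Finset.mem_range, not_lt] at hj
      have : c j = 0 := by
        have := op_ann_ge Kk f hf j hj
        rw [hc]; simp only [this]; rfl
      rw [this]; ring
    rw [hbig (max (n+1) Kk) (le_max_left _ _), hbig2 (max (n+1) Kk) (le_max_right _ _)]


lemma hilb_finite (k n : ℕ) (w : Fin k → ℕ) (hw : ∀ i, 0 < w i) :
    Finite {a : Fin k → ℕ // ∑ i, a i * w i = n} := by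
  have : ∀ (a : {a : Fin k → ℕ // ∑ i, a i * w i = n}) (i : Fin k), a.1 i < n + 1 := by
    rintro ⟨a, ha⟩ i
    show a i < n + 1
    have h1 : a i * w i ≤ n := ha ▸ Finset.single_le_sum
      (f := fun i => a i * w i) (fun j _ => Nat.zero_le _) (Finset.mem_univ i)
    have h2 : a i ≤ a i * w i := Nat.le_mul_of_pos_right _ (hw i)
    omega
  apply Finite.of_injective (fun a => (fun i => (⟨a.1 i, this a i⟩ : Fin (n+1))))
  intro a b hab
  apply Subtype.ext
  funext i
  exact congrArg Fin.val (congrFun hab i)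

lemma hilb_rec (k : ℕ) (w : Fin (k+1) → ℕ) (hw : ∀ i, 0 < w i) (n : ℕ) :
    hilbFn (k+1) w (n + w (Fin.last k)) =
      hilbFn (k+1) w n + hilbFn k (w ∘ Fin.castSucc) (n + w (Fin.last k)) := by
  classical
  set l := Fin.last k with hl
  set m := n + w l with hm
  have key : {a : Fin (k+1) → ℕ // ∑ i, a i * w i = m} ≃
      ({a : Fin (k+1) → ℕ // ∑ i, a i * w i = n} ⊕
       {b : Fin k → ℕ // ∑ i, b i * (w ∘ Fin.castSucc) i = m}) := by
    refine ⟨fun a => if h : a.1 l = 0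
      then Sum.inr ⟨fun i => a.1 i.castSucc, ?_⟩
      else Sum.inl ⟨Function.update a.1 l (a.1 l - 1), ?_⟩,
      fun x => match x with
      | Sum.inl b => ⟨Function.update b.1 l (b.1 l + 1), ?_⟩
      | Sum.inr c => ⟨Fin.snoc c.1 0, ?_⟩, ?_, ?_⟩
    · -- a l = 0 case sum
      have := a.2
      rw [Fin.sum_univ_castSucc] at this
      simp only [← hl, h, zero_mul, add_zero] at this
      simpa using this
    · -- a l ≠ 0 case
      have ha := a.2
      rw [Fin.sum_univ_castSucc] at ha
      rw [Fin.sum_univ_castSucc]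
      have e1 : ∀ i : Fin k, Function.update a.1 l (a.1 l - 1) i.castSucc = a.1 i.castSucc := by
        intro i
        apply Function.update_of_ne (Fin.castSucc_lt_last i).ne _ _
      simp only [e1, Function.update_self]
      have e2 : (a.1 l - 1) * w l = a.1 l * w l - w l := by
        rw [Nat.sub_mul, one_mul]
      have e3 : w l ≤ a.1 l * w l := Nat.le_mul_of_pos_left _ (by omega)
      simp only [← hl, Function.update_self] at *
      omega
    · -- inl inv case
      have hb := b.2
      rw [Fin.sum_univ_castSucc] at hb
      rw [Fin.sum_univ_castSucc]
      have e1 : ∀ i : Fin k, Function.update b.1 l (b.1 l + 1) i.castSucc = b.1 i.castSucc := by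
        intro i
        apply Function.update_of_ne (Fin.castSucc_lt_last i).ne _ _
      simp only [e1, Function.update_self]
      have : (b.1 l + 1) * w l = b.1 l * w l + w l := by ring
      simp only [← hl, Function.update_self] at *
      omega
    · -- inr inv case
      have hc := c.2
      rw [Fin.sum_univ_castSucc]
      simp only [Fin.snoc_castSucc, Fin.snoc_last, zero_mul, add_zero]
      exact hc
    · -- left_inv
      rintro ⟨a, ha⟩
      by_cases h : a l = 0
      · simp only [h, dif_pos]
        apply Subtype.ext
        funext i
        refine Fin.lastCases ?_ ?_ i
        · simp [Fin.snoc_last, show a (Fin.last k) = 0 from h]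
        · intro j; simp [Fin.snoc_castSucc]
      · simp only [h, dif_neg, not_false_iff]
        apply Subtype.ext
        simp only
        funext i
        by_cases hi : i = l
        · subst hi
          simp only [Function.update_self]
          omega
        · rw [Function.update_of_ne hi, Function.update_of_ne hi]
    · -- right_inv
      rintro (⟨b, hb⟩ | ⟨c, hc⟩)
      · have hne : Function.update b l (b l + 1) l ≠ 0 := by
          simp [Function.update_self]
        simp only [hne, dif_neg, not_false_iff]
        congr 1
        apply Subtype.ext
        simp only
        funext i
        by_cases hi : i = l
        · subst hi; simp [Function.update_self]
        · rw [Function.update_of_ne hi, Function.update_of_ne hi]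
      · have hz : (Fin.snoc c 0 : Fin (k+1) → ℕ) l = 0 := Fin.snoc_last _ _
        simp only [hz, dif_pos]
        congr 1
        apply Subtype.ext
        funext i
        simp [Fin.snoc_castSucc]
  have f1 := hilb_finite (k+1) n w hw
  have f2 := hilb_finite k m (w ∘ Fin.castSucc) (fun i => hw _)
  unfold hilbFn
  rw [Nat.card_congr key, Nat.card_sum]


def e0 : V := fun n => if n = 0 then 1 else 0

lemma op_comm (p q : ℚ[X]) (f : V) : op p (op q f) = op q (op p f) := by
  rw [← op_mul, mul_comm, op_mul]

lemma op_S_pow (e : ℕ) (f : V) : op (X^e) f = (S^e) f := by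
  simp [op, map_pow]

lemma hilb_ann (k : ℕ) (w : Fin k → ℕ) (hw : ∀ i, 0 < w i) :
    op (∏ i, (X^(w i) - 1)) (fun n => (hilbFn k w n : ℚ)) = (S ^ (∑ i, w i)) e0 := by
  induction k with
  | zero =>
    have h1 : (∏ i : Fin 0, (X^(w i) - 1) : ℚ[X]) = 1 := Finset.prod_of_isEmpty _
    have h2 : (∑ i : Fin 0, w i) = 0 := Finset.sum_of_isEmpty _
    rw [h1, h2, op_one, pow_zero]
    funext n
    show ((hilbFn 0 w n : ℕ) : ℚ) = e0 n
    unfold hilbFn e0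
    rcases Nat.eq_zero_or_pos n with hn | hn
    · subst hn
      simp only [if_pos rfl]
      rw [Nat.card_eq_one_iff_unique.mpr ?_]
      · norm_num
      constructor
      · constructor
        intro a b
        apply Subtype.ext
        funext i
        exact absurd i.2 (by omega)
      · exact ⟨⟨fun i => 0, by simp⟩⟩
    · rw [if_neg (by omega)]
      have : IsEmpty {a : Fin 0 → ℕ // ∑ i, a i * w i = n} := by
        constructor
        rintro ⟨a, ha⟩
        rw [Finset.sum_of_isEmpty] at ha
        omega
      rw [Nat.card_of_isEmpty]
      norm_num
  | succ k ih =>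
    set l := Fin.last k with hl
    set w' : Fin k → ℕ := w ∘ Fin.castSucc with hw'
    have hrec : op (X^(w l) - 1) (fun n => (hilbFn (k+1) w n : ℚ))
        = (S^(w l)) (fun n => (hilbFn k w' n : ℚ)) := by
      funext n
      rw [op_X_pow_sub_one, S_pow]
      have := hilb_rec k w hw n
      rw [← hl, ← hw'] at this
      rw [this]
      push_cast
      ring
    rw [Fin.prod_univ_castSucc]
    rw [op_mul, hrec, ← op_S_pow, op_comm, op_S_pow]
    have : op (∏ i : Fin k, (X ^ w (Fin.castSucc i) - 1)) (fun n => (hilbFn k w' n : ℚ))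
        = (S ^ (∑ i, w' i)) e0 := ih w' (fun i => hw _)
    rw [this, ← Module.End.mul_apply, ← pow_add, Fin.sum_univ_castSucc]
    congr 1
    simp only [hw', hl, Function.comp_apply]
    rw [Nat.add_comm]

lemma hilb_ann' (k : ℕ) (w : Fin k → ℕ) (hw : ∀ i, 0 < w i) (hk : 1 ≤ k) :
    op (∏ i, (X^(w i) - 1)) (fun n => (hilbFn k w n : ℚ)) = 0 := by
  rw [hilb_ann k w hw]
  funext n
  rw [S_pow]
  have : 1 ≤ ∑ i, w i := by
    calc 1 ≤ w ⟨0, hk⟩ := hw _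
    _ ≤ ∑ i, w i := Finset.single_le_sum (fun j _ => Nat.zero_le _) (Finset.mem_univ _)
  show e0 (n + ∑ i, w i) = 0
  unfold e0
  rw [if_neg (by omega)]

lemma factor_eq (k : ℕ) (w : Fin k → ℕ) (hw : ∀ i, 0 < w i) :
    ((X - 1 : ℚ[X]))^k * (∏ i, ∏ e ∈ (w i).divisors.erase 1, cyclotomic e ℚ)
      = ∏ i, (X^(w i) - 1) := by
  have key : ∀ i : Fin k, (X^(w i) - 1 : ℚ[X])
      = (X - 1) * ∏ e ∈ (w i).divisors.erase 1, cyclotomic e ℚ := by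
    intro i
    rw [← prod_cyclotomic_eq_X_pow_sub_one (hw i) ℚ]
    conv_lhs => rw [← Finset.insert_erase (Nat.one_mem_divisors.mpr (hw i).ne')]
    rw [Finset.prod_insert (Finset.notMem_erase 1 _), cyclotomic_one]
  rw [Finset.prod_congr rfl (fun i _ => key i), Finset.prod_mul_distrib, Finset.prod_const,
    Finset.card_univ, Fintype.card_fin]

lemma coprime_fact (k : ℕ) (w : Fin k → ℕ) :
    IsCoprime ((X - 1 : ℚ[X])^k) (∏ i, ∏ e ∈ (w i).divisors.erase 1, cyclotomic e ℚ) := by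
  apply IsCoprime.pow_left
  have hirr : Irreducible (X - 1 : ℚ[X]) := by
    have := Polynomial.irreducible_X_sub_C (1 : ℚ)
    rwa [map_one] at this
  rw [hirr.coprime_iff_not_dvd]
  intro hdvd
  have hprime : Prime (X - 1 : ℚ[X]) := hirr.prime
  obtain ⟨i, -, hi⟩ := hprime.exists_mem_finset_dvd hdvd
  obtain ⟨e, he, hdvd2⟩ := hprime.exists_mem_finset_dvd hi
  have he1 : e ≠ 1 := Finset.ne_of_mem_erase he
  have hepos : 0 < e := Nat.pos_of_mem_divisors (Finset.mem_of_mem_erase he)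
  have hassoc := hirr.associated_of_dvd (cyclotomic.irreducible_rat hepos) hdvd2
  have heq : (X - 1 : ℚ[X]) = cyclotomic e ℚ :=
    eq_of_monic_of_associated (monic_X_sub_C 1) (cyclotomic.monic e ℚ) hassoc
  rw [← cyclotomic_one ℚ] at heq
  exact he1 (cyclotomic_injective heq).symm

lemma g_dvd (k : ℕ) (w : Fin k → ℕ) (hw : ∀ i, 0 < w i) (D δ : ℕ)
    (hdvd : ∀ i, w i ∣ D) (hD : 0 < D)
    (hcount : ∀ e : ℕ, e ≠ 1 → (Finset.univ.filter (fun i => e ∣ w i)).card ≤ δ) :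
    (∏ i, ∏ e ∈ (w i).divisors.erase 1, cyclotomic e ℚ) ∣ ((X : ℚ[X])^D - 1)^δ := by
  classical
  set E := D.divisors.erase 1 with hE
  have hsub : ∀ i : Fin k, (w i).divisors.erase 1 ⊆ E := by
    intro i e he
    rw [Finset.mem_erase] at he ⊢
    refine ⟨he.1, Nat.mem_divisors.mpr ⟨dvd_trans (Nat.mem_divisors.mp he.2).1 (hdvd i), hD.ne'⟩⟩
  have step1 : (∏ i, ∏ e ∈ (w i).divisors.erase 1, cyclotomic e ℚ)
      = ∏ e ∈ E, (cyclotomic e ℚ) ^ (Finset.univ.filter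
          (fun i : Fin k => e ∈ (w i).divisors.erase 1)).card := by
    have inner : ∀ i : Fin k, ∏ e ∈ (w i).divisors.erase 1, cyclotomic e ℚ
        = ∏ e ∈ E, (if e ∈ (w i).divisors.erase 1 then cyclotomic e ℚ else 1) := by
      intro i
      rw [Finset.prod_ite_mem E _ (fun e => cyclotomic e ℚ),
        Finset.inter_eq_right.mpr (hsub i)]
    rw [Finset.prod_congr rfl (fun i _ => inner i), Finset.prod_comm]
    apply Finset.prod_congr rfl
    intro e _
    rw [← Finset.prod_filter, Finset.prod_const]
  rw [step1]
  have step2 : ∏ e ∈ E, (cyclotomic e ℚ) ^ (Finset.univ.filter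
      (fun i : Fin k => e ∈ (w i).divisors.erase 1)).card ∣ ∏ e ∈ E, (cyclotomic e ℚ)^δ := by
    apply Finset.prod_dvd_prod_of_dvd
    intro e he
    apply pow_dvd_pow
    have he1 : e ≠ 1 := Finset.ne_of_mem_erase he
    refine le_trans (Finset.card_le_card ?_) (hcount e he1)
    intro i hi
    rw [Finset.mem_filter] at hi ⊢
    exact ⟨hi.1, (Nat.mem_divisors.mp (Finset.mem_of_mem_erase hi.2)).1⟩
  have step3 : (∏ e ∈ E, (cyclotomic e ℚ)^δ) ∣ ∏ e ∈ D.divisors, (cyclotomic e ℚ)^δ :=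
    Finset.prod_dvd_prod_of_subset E D.divisors _ (Finset.erase_subset 1 _)
  have step4 : (∏ e ∈ D.divisors, (cyclotomic e ℚ)^δ) = ((X : ℚ[X])^D - 1)^δ := by
    rw [Finset.prod_pow, prod_cyclotomic_eq_X_pow_sub_one hD]
  exact dvd_trans step2 (step4 ▸ step3)

lemma op_shift (dd : ℕ) (c : ℕ) (j : ℕ) : ∀ (v : V),
    op ((X-1)^j) (fun m => v (c + m * dd)) = fun m => op ((X^dd - 1)^j) v (c + m * dd) := by
  induction j with
  | zero =>
    intro v
    simp only [pow_zero, op_one]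
  | succ j ih =>
    intro v
    have h1 : op (X - 1) (fun m => v (c + m * dd)) = fun m => (op (X^dd - 1) v) (c + m * dd) := by
      funext m
      rw [op_sub_one, op_X_pow_sub_one]
      have : c + (m + 1) * dd = c + m * dd + dd := by ring
      rw [this]
    have h2 : ((X:ℚ[X])-1)^(j+1) = (X-1)^j * (X-1) := pow_succ _ _
    have h3 : ((X:ℚ[X])^dd-1)^(j+1) = (X^dd-1)^j * (X^dd-1) := pow_succ _ _
    rw [h2, op_mul, h1, ih (op (X^dd - 1) v)]
    funext m
    rw [h3, op_mul]

/-- A sequence annihilated by `(S^dd - 1)^δ` is polynomial of degree `< δ` on each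
residue class mod `dd`. -/
lemma residue_poly (dd δ : ℕ) (hd : 0 < dd) (v : V) (hv : op ((X^dd - 1)^δ) v = 0) (c : ℕ) :
    ∃ q : ℚ[X], q.degree < (δ : WithBot ℕ) ∧ ∀ m : ℕ, v (c + m * dd) = q.eval ((c + m * dd : ℕ) : ℚ) := by
  have hann : op ((X-1)^δ) (fun m => v (c + m * dd)) = 0 := by
    rw [op_shift dd c δ v, hv]
    funext m
    rfl
  obtain ⟨p, hpdeg, hpeval⟩ := poly_of_ann δ _ hann
  set lin : ℚ[X] := Polynomial.C (1/(dd:ℚ)) * (X - Polynomial.C (c : ℚ)) with hlin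
  refine ⟨p.comp lin, ?_, ?_⟩
  · rcases eq_or_ne p 0 with hp | hp
    · rw [hp, Polynomial.zero_comp, Polynomial.degree_zero]
      exact lt_of_lt_of_le (by exact WithBot.bot_lt_coe 0) (by exact_mod_cast Nat.zero_le δ)
    · have hδpos : p.natDegree < δ := by
        have := hpdeg
        rwa [Polynomial.degree_eq_natDegree hp, Nat.cast_lt] at this
      apply lt_of_le_of_lt (Polynomial.degree_le_natDegree)
      rw [Polynomial.natDegree_comp]
      have hlin1 : lin.natDegree = 1 := by
        rw [hlin, Polynomial.natDegree_C_mul (by positivity), Polynomial.natDegree_X_sub_C]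
      rw [hlin1, mul_one, Nat.cast_lt]
      exact hδpos
  · intro m
    rw [Polynomial.eval_comp, hlin, Polynomial.eval_mul, Polynomial.eval_C,
      Polynomial.eval_sub, Polynomial.eval_X, Polynomial.eval_C]
    have harg : (1/(dd:ℚ)) * (((c + m * dd : ℕ) : ℚ) - (c:ℚ)) = (m : ℚ) := by
      have hdd : (dd:ℚ) ≠ 0 := by positivity
      push_cast
      field_simp
      ring
    rw [harg]
    exact hpeval m

lemma poly_growth (p : ℚ[X]) : ∃ C : ℚ, 0 ≤ C ∧ ∀ x : ℚ, 1 ≤ x →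
    |p.eval x| ≤ C * x^p.natDegree := by
  refine ⟨∑ i ∈ range (p.natDegree + 1), |p.coeff i|, Finset.sum_nonneg (fun i _ => abs_nonneg _), ?_⟩
  intro x hx
  have hx0 : 0 ≤ x := by linarith
  rw [Polynomial.eval_eq_sum_range]
  refine le_trans (Finset.abs_sum_le_sum_abs _ _) ?_
  rw [Finset.sum_mul]
  apply Finset.sum_le_sum
  intro i hi
  rw [abs_mul, abs_pow, abs_of_nonneg hx0]
  apply mul_le_mul_of_nonneg_left _ (abs_nonneg _)
  exact pow_le_pow_right₀ hx (by have := Finset.mem_range.mp hi; omega)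

lemma hilb_lower (K : ℕ) (hK : 0 < K) (w : Fin (K+1) → ℕ) (hw : ∀ i, 0 < w i) (D : ℕ)
    (hdvd : ∀ i, w i ∣ D) (hD : 0 < D) (m : ℕ) :
    (m / K + 1)^K ≤ hilbFn (K+1) w (m * D) := by
  classical
  set t := m / K with ht
  set F : (Fin K → Fin (t+1)) → (Fin (K+1) → ℕ) := fun b =>
    Fin.snoc (fun i => (b i : ℕ) * (D / w i.castSucc))
      ((m - ∑ i, (b i : ℕ)) * (D / w (Fin.last K))) with hF
  have hsum : ∀ b : Fin K → Fin (t+1), (∑ i, (b i : ℕ)) ≤ m := by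
    intro b
    calc ∑ i, (b i : ℕ) ≤ ∑ _i : Fin K, t := Finset.sum_le_sum (fun i _ => by
          have := (b i).2; omega)
      _ = t * K := by rw [Finset.sum_const, Finset.card_univ, Fintype.card_fin,
            smul_eq_mul, Nat.mul_comm]
      _ ≤ m := by rw [ht]; exact Nat.div_mul_le_self m K
  have hmem : ∀ b : Fin K → Fin (t+1), ∑ i, F b i * w i = m * D := by
    intro b
    rw [Fin.sum_univ_castSucc]
    simp only [hF, Fin.snoc_castSucc, Fin.snoc_last]
    have e1 : ∀ i : Fin K, (b i : ℕ) * (D / w i.castSucc) * w i.castSucc = (b i : ℕ) * D := by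
      intro i
      rw [Nat.mul_assoc, Nat.div_mul_cancel (hdvd i.castSucc)]
    have e2 : (m - ∑ i, (b i : ℕ)) * (D / w (Fin.last K)) * w (Fin.last K)
        = (m - ∑ i, (b i : ℕ)) * D := by
      rw [Nat.mul_assoc, Nat.div_mul_cancel (hdvd (Fin.last K))]
    rw [Finset.sum_congr rfl (fun i _ => e1 i), e2, ← Finset.sum_mul, ← Nat.add_mul]
    congr 1
    have := hsum b
    omega
  have hinj : Function.Injective F := by
    intro b b' hbb
    funext i
    have := congrFun hbb i.castSucc
    simp only [hF, Fin.snoc_castSucc] at this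
    have hpos : 0 < D / w i.castSucc :=
      Nat.div_pos (Nat.le_of_dvd hD (hdvd i.castSucc)) (hw i.castSucc)
    exact Fin.ext (Nat.eq_of_mul_eq_mul_right hpos this)
  have fin := hilb_finite (K+1) (m*D) w hw
  have hinj2 : Function.Injective
      (fun b : (Fin K → Fin (t+1)) => (⟨F b, hmem b⟩ :
        {a : Fin (K+1) → ℕ // ∑ i, a i * w i = m * D})) := by
    intro b b' hbb
    exact hinj (congrArg Subtype.val hbb)
  have hcard := Nat.card_le_card_of_injective _ hinj2
  have : Nat.card (Fin K → Fin (t+1)) = (t+1)^K := by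
    simp [Nat.card_eq_fintype_card]
  rw [this] at hcard
  exact hcard

end Stmt10Aux
end

namespace Stmt10Aux
open Polynomial Finset

lemma op_add (p q : ℚ[X]) (f : V) : op (p + q) f = op p f + op q f := by
  unfold op
  rw [map_add]
  rfl

theorem aux (K δ D N : ℕ) (w : Fin (K+1) → ℕ) (hw : ∀ i, 0 < w i)
    (hdvdD : ∀ i, w i ∣ D) (hDpos : 0 < D) (hδK : δ ≤ K)
    (hcount : ∀ e : ℕ, e ≠ 1 → (Finset.univ.filter (fun i => e ∣ w i)).card ≤ δ)
    (P : ZMod D → Polynomial ℚ)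
    (hN : ∀ n : ℕ, N ≤ n → (P (n : ZMod D)).eval (n : ℚ) = hilbFn (K+1) w n) :
    (∃ Q : Polynomial ℚ, Q.natDegree = K ∧
        ∃ T : ZMod D → Polynomial ℚ,
          (∀ i, P i = Q + T i) ∧ ∀ i, (T i).degree < (δ : WithBot ℕ)) ∧
      ∀ r : ℕ, δ ≤ r → r ≤ K →
        ∀ i j, (P i).coeff r = (P j).coeff r := by
  classical
  set g := ∏ i, ∏ e ∈ (w i).divisors.erase 1, Polynomial.cyclotomic e ℚ with hgdef
  have hfac := factor_eq (K+1) w hw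
  have hcop := coprime_fact (K+1) w
  have hgd := g_dvd (K+1) w hw D δ hdvdD hDpos hcount
  obtain ⟨a, b, hab⟩ := hcop
  set h : V := fun n => (hilbFn (K+1) w n : ℚ) with hh
  have hann : op (∏ i, (X^(w i) - 1)) h = 0 := hilb_ann' (K+1) w hw (by omega)
  set u : V := op (b * g) h with hu
  set v : V := op (a * (X-1)^(K+1)) h with hv
  have huv : ∀ n, h n = u n + v n := by
    intro n
    have h1 : op (a * (X-1)^(K+1) + b * g) h = h := by rw [hab, op_one]
    have h2 : op (a * (X-1)^(K+1) + b * g) h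
        = op (a * (X-1)^(K+1)) h + op (b * g) h := op_add _ _ _
    have h3 := congrFun (h1.symm.trans h2) n
    rw [h3]
    show v n + u n = u n + v n
    ring
  have hu_ann : op ((X-1)^(K+1)) u = 0 := by
    rw [hu, ← op_mul]
    have he : ((X-1:ℚ[X])^(K+1)) * (b * g) = b * ((X-1)^(K+1) * g) := by ring
    rw [he, hfac, op_mul, hann, map_zero]
  obtain ⟨c, hc⟩ := hgd
  have hv_ann : op ((X^D - 1)^δ) v = 0 := by
    rw [hv, ← op_mul]
    have he : ((X:ℚ[X])^D - 1)^δ * (a * (X-1)^(K+1)) = (a * c) * ((X-1)^(K+1) * g) := by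
      rw [hc]; ring
    rw [he, hfac, op_mul, hann, map_zero]
  obtain ⟨Q, hQdeg, hQeval⟩ := poly_of_ann (K+1) u hu_ann
  choose T' hT'deg hT'eval using fun (cc : ℕ) => residue_poly D δ hDpos v hv_ann cc
  set T : ZMod D → ℚ[X] := fun i => T' i.val with hT
  haveI : NeZero D := ⟨hDpos.ne'⟩
  have key : ∀ (cc m : ℕ),
      h (cc + m * D) = Q.eval ((cc + m * D : ℕ) : ℚ) + (T' cc).eval ((cc + m * D : ℕ) : ℚ) := by
    intro cc m
    rw [huv (cc + m * D), hQeval, hT'eval cc m]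
  have hPeq : ∀ i, P i = Q + T i := by
    intro i
    have hroot : ∀ m : ℕ,
        (P i - (Q + T i)).IsRoot ((i.val + (m + N) * D : ℕ) : ℚ) := by
      intro m
      set n := i.val + (m + N) * D with hn
      have hnN : N ≤ n := by
        have h1 : N ≤ (m + N) * D := le_trans (by omega) (Nat.le_mul_of_pos_right _ hDpos)
        omega
      have hcast : ((n : ℕ) : ZMod D) = i := by
        rw [hn]
        push_cast [ZMod.natCast_self]
        simpa using ZMod.natCast_rightInverse i
      have hPn := hN n hnN
      rw [hcast] at hPn
      have hhn := key i.val (m + N)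
      simp only [Polynomial.IsRoot, Polynomial.eval_sub, Polynomial.eval_add]
      rw [hPn, show ((hilbFn (K+1) w n : ℕ) : ℚ) = h n from rfl, hhn]
      show Q.eval _ + (T' i.val).eval _ - (Q.eval _ + (T i).eval _) = 0
      rw [hT]
      ring
    have hinj : Function.Injective (fun m : ℕ => ((i.val + (m + N) * D : ℕ) : ℚ)) := by
      intro m1 m2 hm
      simp only [Nat.cast_inj] at hm
      have h2 : (m1 + N) * D = (m2 + N) * D := by omega
      have h3 := Nat.eq_of_mul_eq_mul_right hDpos h2
      omega
    have hz : P i - (Q + T i) = 0 :=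
      Polynomial.eq_zero_of_infinite_isRoot _
        (Set.infinite_of_injective_forall_mem hinj hroot)
    exact sub_eq_zero.mp hz
  have hTdeg : ∀ i, (T i).degree < (δ : WithBot ℕ) := fun i => hT'deg i.val
  have hcoeff : ∀ r, δ ≤ r → ∀ i, (P i).coeff r = Q.coeff r := by
    intro r hr i
    rw [hPeq i, Polynomial.coeff_add,
      Polynomial.coeff_eq_zero_of_degree_lt
        (lt_of_lt_of_le (hTdeg i) (by exact_mod_cast Nat.cast_le.mpr hr)), add_zero]
  have hQnd : Q.natDegree ≤ K := by
    rcases eq_or_ne Q 0 with h0 | h0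
    · rw [h0]; simp
    · have := hQdeg
      rw [Polynomial.degree_eq_natDegree h0, Nat.cast_lt] at this
      omega
  constructor
  · refine ⟨Q, ?_, T, hPeq, hTdeg⟩
    rcases Nat.eq_zero_or_pos K with hK0 | hKpos
    · omega
    by_contra hneq
    have hQK : Q.natDegree ≤ K - 1 := by omega
    have hT0nd : (T' 0).natDegree ≤ K - 1 := by
      rcases eq_or_ne (T' 0) 0 with h0 | h0
      · rw [h0]; simp
      · have := hT'deg 0
        rw [Polynomial.degree_eq_natDegree h0, Nat.cast_lt] at this
        omega
    set R := Q + T' 0 with hR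
    have hRdeg : R.natDegree ≤ K - 1 :=
      le_trans (Polynomial.natDegree_add_le _ _) (by omega)
    obtain ⟨C, hC0, hCb⟩ := poly_growth R
    set m := max 1 (⌈C * (D:ℚ)^(K-1) * (K:ℚ)^K⌉₊ + 1) with hm
    have hm1 : 1 ≤ m := le_max_left _ _
    have hmC : C * (D:ℚ)^(K-1) * (K:ℚ)^K < (m:ℚ) := by
      have h1 : (⌈C * (D:ℚ)^(K-1) * (K:ℚ)^K⌉₊ + 1 : ℕ) ≤ m := le_max_right _ _
      calc C * (D:ℚ)^(K-1) * (K:ℚ)^K ≤ (⌈C * (D:ℚ)^(K-1) * (K:ℚ)^K⌉₊ : ℚ) := Nat.le_ceil _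
        _ < ((⌈C * (D:ℚ)^(K-1) * (K:ℚ)^K⌉₊ + 1 : ℕ) : ℚ) := by push_cast; linarith
        _ ≤ (m : ℚ) := by exact_mod_cast h1
    have hupp : (hilbFn (K+1) w (0 + m * D) : ℚ)
        = R.eval ((0 + m * D : ℕ) : ℚ) := by
      have := key 0 m
      rw [hR, Polynomial.eval_add]
      exact this
    have hlow := hilb_lower K hKpos w hw D hdvdD hDpos m
    have hlowq : ((m / K + 1 : ℕ) : ℚ)^K ≤ (hilbFn (K+1) w (0 + m * D) : ℚ) := by
      rw [Nat.zero_add]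
      exact_mod_cast hlow
    have hKq : (0:ℚ) < (K:ℚ) := by exact_mod_cast hKpos
    have hfq : (m:ℚ) / (K:ℚ) < ((m / K + 1 : ℕ) : ℚ) := by
      rw [div_lt_iff₀ hKq]
      have h1 : m < (m / K + 1) * K := by
        have e1 := Nat.div_add_mod m K
        have e2 : m % K < K := Nat.mod_lt m hKpos
        have e3 : (m / K + 1) * K = K * (m / K) + K := by ring
        omega
      exact_mod_cast h1
    have h0x : (0:ℚ) ≤ (m:ℚ) / (K:ℚ) := by positivity
    have hpowlow : ((m:ℚ)/(K:ℚ))^K ≤ ((m / K + 1 : ℕ) : ℚ)^K :=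
      pow_le_pow_left₀ h0x (le_of_lt hfq) K
    set x : ℚ := ((0 + m * D : ℕ) : ℚ) with hx
    have hx1 : 1 ≤ x := by
      have hmD : (1:ℕ) ≤ 0 + m * D := by
        have := Nat.mul_pos (show 0 < m by omega) hDpos
        omega
      rw [hx]
      exact_mod_cast hmD
    have hRb := hCb x hx1
    have hevR : R.eval x ≤ C * x^(K-1) := by
      calc R.eval x ≤ |R.eval x| := le_abs_self _
        _ ≤ C * x^R.natDegree := hRb
        _ ≤ C * x^(K-1) := by
            apply mul_le_mul_of_nonneg_left _ hC0
            exact pow_le_pow_right₀ hx1 hRdeg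
    have hxiseq : x = (m:ℚ) * (D:ℚ) := by rw [hx]; push_cast; ring
    have hchain : ((m:ℚ)/(K:ℚ))^K ≤ C * x^(K-1) :=
      le_trans hpowlow (le_trans (hlowq.trans_eq hupp) hevR)
    have hDq : (0:ℚ) < (D:ℚ) := by exact_mod_cast hDpos
    have hmq : (0:ℚ) < (m:ℚ) := by exact_mod_cast hm1
    have hexp : ((m:ℚ)/(K:ℚ))^K = (m:ℚ)^K / (K:ℚ)^K := div_pow _ _ _
    have hxpow : x^(K-1) = (m:ℚ)^(K-1) * (D:ℚ)^(K-1) := by rw [hxiseq, mul_pow]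
    have hmK : (m:ℚ)^K = (m:ℚ)^(K-1) * (m:ℚ) := by
      rw [← pow_succ]
      congr 1
      omega
    rw [hexp, hxpow, hmK] at hchain
    have hKKpos : (0:ℚ) < (K:ℚ)^K := by positivity
    have hmpow : (0:ℚ) < (m:ℚ)^(K-1) := by positivity
    rw [div_le_iff₀ hKKpos] at hchain
    nlinarith [hchain, hmC, hmpow]
  · intro r hr hr2 i j
    rw [hcoeff r hr i, hcoeff r hr j]

end Stmt10Aux


theorem stmt10 (k : ℕ) (w : Fin k → ℕ) (hw : ∀ i, 0 < w i)
    (hgcd : Finset.univ.gcd w = 1)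
    (δ : ℕ)
    (hδ : IsGreatest {m | ∃ I : Finset (Fin k), I.gcd w ≠ 1 ∧ I.card = m} δ)
    (P : ZMod (Finset.univ.lcm w) → Polynomial ℚ)
    (hP : ∃ N : ℕ, ∀ n : ℕ, N ≤ n →
      (P (n : ZMod (Finset.univ.lcm w))).eval (n : ℚ) = hilbFn k w n) :
    (∃ Q : Polynomial ℚ, Q.natDegree = k - 1 ∧
        ∃ T : ZMod (Finset.univ.lcm w) → Polynomial ℚ,
          (∀ i, P i = Q + T i) ∧ ∀ i, (T i).degree < (δ : WithBot ℕ)) ∧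
      ∀ r : ℕ, δ ≤ r → r ≤ k - 1 →
        ∀ i j, (P i).coeff r = (P j).coeff r := by
  classical
  rcases Nat.eq_zero_or_pos k with hk0 | hk
  · exfalso
    subst hk0
    rw [Finset.univ_eq_empty, Finset.gcd_empty] at hgcd
    exact absurd hgcd (by norm_num)
  obtain ⟨K, rfl⟩ : ∃ K, k = K + 1 := ⟨k - 1, by omega⟩
  have hdvdD : ∀ i, w i ∣ Finset.univ.lcm w := fun i => Finset.dvd_lcm (Finset.mem_univ i)
  have hDpos : 0 < Finset.univ.lcm w := by
    rcases Nat.eq_zero_or_pos (Finset.univ.lcm w) with h0 | h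
    · exfalso
      obtain ⟨i, -, hi⟩ := Finset.lcm_eq_zero_iff.mp h0
      have := hw i
      omega
    · exact h
  obtain ⟨⟨I, hI, hIcard⟩, hub⟩ := hδ
  have hδK : δ ≤ K := by
    have h1 : I.card ≤ K + 1 := le_trans (Finset.card_le_card (Finset.subset_univ I))
      (by simp)
    by_contra hcon
    have hδk' : δ = K + 1 := by omega
    have hIu : I = Finset.univ := Finset.eq_univ_of_card I (by rw [hIcard, hδk']; simp)
    rw [hIu, hgcd] at hI
    exact hI rfl
  have hcount : ∀ e : ℕ, e ≠ 1 →
      (Finset.univ.filter (fun i => e ∣ w i)).card ≤ δ := by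
    intro e he
    apply hub
    refine ⟨_, ?_, rfl⟩
    intro hg1
    have hdq : e ∣ (Finset.univ.filter (fun i => e ∣ w i)).gcd w :=
      Finset.dvd_gcd (fun i hi => (Finset.mem_filter.mp hi).2)
    rw [hg1] at hdq
    exact he (Nat.dvd_one.mp hdq)
  obtain ⟨N, hN⟩ := hP
  have := Stmt10Aux.aux K δ (Finset.univ.lcm w) N w hw hdvdD hDpos hδK hcount P hN
  simpa only [Nat.add_sub_cancel] using this
end

section
/- Let R = K[x_1,...,x_k] graded by W = [d_1,...,d_k] with gcd 1, d = lcm(d_i). For 0 ≤ r ≤ k−1 define δ_r = lcm over all subsets I ⊆ {1,...,k} with |I| = r+1 of gcd(d_i)_{i∈I}. Then the coefficient of x^r in P_i equals the coefficient of x^r in P_j whenever i ≡ j mod δ_r. -/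
open Polynomial

/-- `δ_r` : the lcm of `gcd (d_i)_{i ∈ I}` over all subsets `I` of cardinality `r+1`. -/
def deltaR (k : ℕ) (w : Fin k → ℕ) (r : ℕ) : ℕ :=
  ((Finset.univ : Finset (Finset (Fin k))).filter (fun I => I.card = r + 1)).lcm
    (fun I => I.gcd w)


section pieces
variable {k : ℕ}

lemma term_le (w : Fin k → ℕ) (n : ℕ) (a : Fin k → ℕ) (ha : ∑ i, a i * w i = n)
    (i : Fin k) : a i * w i ≤ n := by
  have h0 := Finset.single_le_sum (f := fun i => a i * w i)
    (fun _ _ => Nat.zero_le _) (Finset.mem_univ i)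
  rw [ha] at h0
  exact h0

lemma coord_le (w : Fin k → ℕ) (hw : ∀ i, 0 < w i) (n : ℕ) (a : Fin k → ℕ)
    (ha : ∑ i, a i * w i = n) (i : Fin k) : a i ≤ n := by
  have h1 := term_le w n a ha i
  have h2 : a i ≤ a i * w i := Nat.le_mul_of_pos_right _ (hw i)
  omega

lemma solFinite (w : Fin k → ℕ) (hw : ∀ i, 0 < w i) (n : ℕ) :
    Finite {a : Fin k → ℕ // ∑ i, a i * w i = n} := by
  refine Finite.of_injective
    (fun a i => (⟨a.1 i, Nat.lt_succ_of_le (coord_le w hw n a.1 a.2 i)⟩ : Fin (n+1))) ?_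
  intro a b hab
  ext i
  exact congrArg Fin.val (congrFun hab i)

lemma hilbFn_le (w : Fin (k+1) → ℕ) (hw : ∀ i, 0 < w i) (n : ℕ) :
    hilbFn (k+1) w n ≤ (n+1)^k := by
  haveI := solFinite w hw n
  have : hilbFn (k+1) w n ≤ Nat.card (Fin k → Fin (n+1)) := by
    apply Nat.card_le_card_of_injective
      (f := fun (a : {a : Fin (k+1) → ℕ // ∑ i, a i * w i = n}) i =>
        (⟨a.1 i.castSucc, Nat.lt_succ_of_le (coord_le w hw n a.1 a.2 i.castSucc)⟩ : Fin (n+1)))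
    intro a b hab
    have hcs : ∀ i : Fin k, a.1 i.castSucc = b.1 i.castSucc := by
      intro i; exact congrArg Fin.val (congrFun hab i)
    have hsum : ∑ i, a.1 i * w i = ∑ i, b.1 i * w i := by rw [a.2, b.2]
    rw [Fin.sum_univ_castSucc, Fin.sum_univ_castSucc] at hsum
    have hrest : ∑ i : Fin k, a.1 i.castSucc * w i.castSucc
        = ∑ i : Fin k, b.1 i.castSucc * w i.castSucc := by
      apply Finset.sum_congr rfl; intro i _; rw [hcs i]
    have hlast : a.1 (Fin.last k) = b.1 (Fin.last k) := by
      have h2 : a.1 (Fin.last k) * w (Fin.last k) = b.1 (Fin.last k) * w (Fin.last k) := by omega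
      exact Nat.eq_of_mul_eq_mul_right (hw _) h2
    ext i
    rcases Fin.eq_castSucc_or_eq_last i with ⟨j, rfl⟩ | rfl
    · exact hcs j
    · exact hlast
  simpa [Nat.card_eq_fintype_card] using this

lemma hilbRec (w : Fin (k+1) → ℕ) (hw : ∀ i, 0 < w i) (m : Fin (k+1)) (n : ℕ) :
    hilbFn (k+1) w n
      = hilbFn k (w ∘ m.succAbove) n + (if w m ≤ n then hilbFn (k+1) w (n - w m) else 0) := by
  classical
  haveI := solFinite w hw n
  set A := {a : Fin (k+1) → ℕ // ∑ i, a i * w i = n} with hA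
  have hsplit : Nat.card A
      = Nat.card {x : A // x.1 m = 0} + Nat.card {x : A // ¬ x.1 m = 0} := by
    rw [← Nat.card_sum]
    exact (Nat.card_congr (Equiv.sumCompl (fun x : A => x.1 m = 0))).symm
  have e1 : {x : A // x.1 m = 0} ≃ {b : Fin k → ℕ // ∑ i, b i * (w ∘ m.succAbove) i = n} := by
    refine ⟨fun x => ⟨fun i => x.1.1 (m.succAbove i), ?_⟩,
      fun b => ⟨⟨(m.insertNth 0 b.1 : Fin (k+1) → ℕ), ?_⟩, ?_⟩, ?_, ?_⟩
    · have hx := x.1.2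
      rw [Fin.sum_univ_succAbove (fun i => x.1.1 i * w i) m, x.2, zero_mul, zero_add] at hx
      simpa using hx
    · rw [Fin.sum_univ_succAbove (fun i => (m.insertNth 0 b.1 : Fin (k+1) → ℕ) i * w i) m]
      simp only [Fin.insertNth_apply_same, Fin.insertNth_apply_succAbove, zero_mul, zero_add]
      simpa using b.2
    · simp
    · intro x
      apply Subtype.ext
      apply Subtype.ext
      funext j
      refine Fin.succAboveCases m ?_ (fun i => ?_) j
      · simp [x.2]
      · simp
    · intro b
      apply Subtype.ext
      funext i
      simp
  have hle : ∀ x : A, x.1 m * w m ≤ n := fun x => term_le w n x.1 x.2 m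
  by_cases hwm : w m ≤ n
  · have e2 : {x : A // ¬ x.1 m = 0} ≃ {a : Fin (k+1) → ℕ // ∑ i, a i * w i = n - w m} := by
      have upd_sum : ∀ (f : Fin (k+1) → ℕ) (t : ℕ),
          ∑ i, Function.update f m t i * w i
            = t * w m + ∑ i ∈ Finset.univ.erase m, f i * w i := by
        intro f t
        have hfun : ∀ i, Function.update f m t i * w i
            = Function.update (fun j => f j * w j) m (t * w m) i := by
          intro i
          rcases eq_or_ne i m with rfl | h
          · simp
          · simp [Function.update_of_ne h]
        simp only [hfun]
        rw [Finset.sum_update_of_mem (Finset.mem_univ m), Finset.erase_eq]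
      have orig_sum : ∀ f : Fin (k+1) → ℕ,
          ∑ i, f i * w i = f m * w m + ∑ i ∈ Finset.univ.erase m, f i * w i :=
        fun f => (Finset.add_sum_erase _ (fun i => f i * w i) (Finset.mem_univ m)).symm
      refine ⟨fun x => ⟨Function.update x.1.1 m (x.1.1 m - 1), ?_⟩,
        fun a => ⟨⟨Function.update a.1 m (a.1 m + 1), ?_⟩, ?_⟩, ?_, ?_⟩
      · rw [upd_sum]
        have h1 := x.1.2
        rw [orig_sum] at h1
        have h2 : x.1.1 m ≠ 0 := x.2
        have h3 : w m ≤ x.1.1 m * w m := by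
          calc w m = 1 * w m := (one_mul _).symm
          _ ≤ x.1.1 m * w m := Nat.mul_le_mul_right _ (by omega)
        have h4 : (x.1.1 m - 1) * w m = x.1.1 m * w m - w m := by
          rw [Nat.sub_mul, one_mul]
        omega
      · rw [upd_sum]
        have h1 := a.2
        rw [orig_sum] at h1
        have h5 : (a.1 m + 1) * w m = a.1 m * w m + w m := by ring
        omega
      · simp
      · intro x
        apply Subtype.ext
        apply Subtype.ext
        funext j
        by_cases h : j = m
        · subst h
          simp only [Function.update_self]
          have h2 : x.1.1 j ≠ 0 := x.2
          omega
        · simp [Function.update_of_ne h]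
      · intro a
        apply Subtype.ext
        funext j
        by_cases h : j = m
        · subst h; simp
        · simp [Function.update_of_ne h]
    have c1 : hilbFn (k+1) w n = Nat.card A := rfl
    have c2 : hilbFn k (w ∘ m.succAbove) n = Nat.card {x : A // x.1 m = 0} :=
      (Nat.card_congr e1).symm
    have c3 : hilbFn (k+1) w (n - w m) = Nat.card {x : A // ¬ x.1 m = 0} :=
      (Nat.card_congr e2).symm
    rw [c1, c2, if_pos hwm, c3, hsplit]
  · have e2 : IsEmpty {x : A // ¬ x.1 m = 0} := by
      refine ⟨fun x => ?_⟩
      have h2 : x.1.1 m ≠ 0 := x.2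
      have h3 : w m ≤ x.1.1 m * w m := by
        calc w m = 1 * w m := (one_mul _).symm
        _ ≤ x.1.1 m * w m := Nat.mul_le_mul_right _ (by omega)
      have h4 := hle x.1
      omega
    have c1 : hilbFn (k+1) w n = Nat.card A := rfl
    have c2 : hilbFn k (w ∘ m.succAbove) n = Nat.card {x : A // x.1 m = 0} :=
      (Nat.card_congr e1).symm
    have c3 : Nat.card {x : A // ¬ x.1 m = 0} = 0 := Nat.card_of_isEmpty
    rw [c1, c2, if_neg hwm, hsplit, c3]

end pieces


section divs
variable {k : ℕ}

lemma deltaR_dvd_of_le (w : Fin k → ℕ) {s t : ℕ} (hst : s ≤ t) :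
    deltaR k w t ∣ deltaR k w s := by
  classical
  apply Finset.lcm_dvd
  intro J hJ
  have hJc : J.card = t + 1 := (Finset.mem_filter.1 hJ).2
  obtain ⟨I, hIJ, hIc⟩ := Finset.exists_subset_card_eq (show s + 1 ≤ J.card by omega)
  have h1 : J.gcd w ∣ I.gcd w :=
    Finset.dvd_gcd fun i hi => Finset.gcd_dvd (hIJ hi)
  exact h1.trans (Finset.dvd_lcm (Finset.mem_filter.2 ⟨Finset.mem_univ _, hIc⟩))

lemma deltaR_succAbove_dvd (w : Fin (k+1) → ℕ) (m : Fin (k+1)) (s : ℕ) :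
    deltaR k (w ∘ m.succAbove) s ∣ deltaR (k+1) w s := by
  classical
  apply Finset.lcm_dvd
  intro J hJ
  have hJc : J.card = s + 1 := (Finset.mem_filter.1 hJ).2
  have himg : (J.image m.succAbove).gcd w = J.gcd (w ∘ m.succAbove) := Finset.gcd_image J
  have hcard : (J.image m.succAbove).card = s + 1 := by
    rw [Finset.card_image_of_injective _ (Fin.succAbove_right_injective (p := m))]
    exact hJc
  rw [← himg]
  exact Finset.dvd_lcm (Finset.mem_filter.2 ⟨Finset.mem_univ _, hcard⟩)

lemma deltaR_dvd_M (w : Fin k → ℕ) (M : ℕ) (hM : ∀ i, w i ∣ M) (s : ℕ) :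
    deltaR k w s ∣ M := by
  classical
  apply Finset.lcm_dvd
  intro J hJ
  have hJc : J.card = s + 1 := (Finset.mem_filter.1 hJ).2
  obtain ⟨i, hi⟩ := Finset.card_pos.1 (by omega : 0 < J.card)
  exact (Finset.gcd_dvd hi).trans (hM i)

lemma gcd_dvd_deltaR (w : Fin k → ℕ) {s : ℕ} (hs : s + 1 ≤ k) :
    Finset.univ.gcd w ∣ deltaR k w s := by
  classical
  obtain ⟨I, _, hIc⟩ := Finset.exists_subset_card_eq
    (show s + 1 ≤ (Finset.univ : Finset (Fin k)).card by simpa using hs)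
  have h1 : Finset.univ.gcd w ∣ I.gcd w :=
    Finset.dvd_gcd fun i _ => Finset.gcd_dvd (Finset.mem_univ i)
  exact h1.trans (Finset.dvd_lcm (Finset.mem_filter.2 ⟨Finset.mem_univ _, hIc⟩))

end divs

section steps

/-- invariance under steps passes to multiples -/
lemma step_mul (φ : ℕ → ℚ) (c : ℕ) (hc : ∀ a, φ (a + c) = φ a) (u : ℕ) :
    ∀ a, φ (a + u * c) = φ a := by
  induction u with
  | zero => simp
  | succ u ih =>
    intro a
    have : a + (u + 1) * c = (a + c) + u * c := by ring
    rw [this, ih, hc]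

lemma step_gcd (φ : ℕ → ℚ) (c₁ c₂ : ℕ) (h₁ : ∀ a, φ (a + c₁) = φ a)
    (h₂ : ∀ a, φ (a + c₂) = φ a) : ∀ a, φ (a + Nat.gcd c₁ c₂) = φ a := by
  induction c₁, c₂ using Nat.gcd.induction with
  | H0 n => simpa using h₂
  | H1 m n hm ih =>
    -- gcd m n = gcd (n % m) m
    have hmod : ∀ a, φ (a + n % m) = φ a := by
      intro a
      have h5 : n % m + n / m * m = n := Nat.mod_add_div' n m
      have h3 : a + n % m + n / m * m = a + n := by omega
      have h4 := step_mul φ m h₁ (n / m) (a + n % m)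
      rw [h3] at h4
      rw [← h4, h₂]
    rw [Nat.gcd_rec]
    exact ih hmod h₁

lemma step_finset_gcd {ι : Type*} (φ : ℕ → ℚ) (S : Finset ι) (w : ι → ℕ)
    (h : ∀ m ∈ S, ∀ a, φ (a + w m) = φ a) : ∀ a, φ (a + S.gcd w) = φ a := by
  classical
  induction S using Finset.induction with
  | empty => simp
  | @insert x S' hxS ih =>
    rw [Finset.gcd_insert]
    exact step_gcd φ (w x) (S'.gcd w) (h x (Finset.mem_insert_self x S'))
      (ih fun m hm => h m (Finset.mem_insert_of_mem hm))

lemma step_dvd (φ : ℕ → ℚ) (c D : ℕ) (hc : ∀ a, φ (a + c) = φ a) (hD : c ∣ D) :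
    ∀ a, φ (a + D) = φ a := by
  obtain ⟨u, rfl⟩ := hD
  intro a
  have := step_mul φ c hc u a
  rwa [mul_comm u c] at this

end steps

open Polynomial

lemma eval_pos_eventually (v : ℚ[X]) (h1 : 0 < v.degree) (h2 : 0 < v.leadingCoeff) :
    ∃ T : ℕ, ∀ n : ℕ, T ≤ n → 0 < v.eval (n : ℚ) := by
  set f : ℚ →+* ℝ := Rat.castHom ℝ
  set V : ℝ[X] := v.map f with hV
  have hdeg : V.degree = v.degree := degree_map_eq_of_injective f.injective v
  have hlc : V.leadingCoeff = (v.leadingCoeff : ℝ) := leadingCoeff_map_of_injective f.injective v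
  have htend : Filter.Tendsto (fun x : ℝ => V.eval x) Filter.atTop Filter.atTop :=
    Polynomial.tendsto_atTop_of_leadingCoeff_nonneg V (hdeg ▸ h1)
      (by rw [hlc]; positivity)
  have hcomp : Filter.Tendsto (fun n : ℕ => V.eval (n : ℝ)) Filter.atTop Filter.atTop :=
    htend.comp tendsto_natCast_atTop_atTop
  have hev := hcomp.eventually_ge_atTop 1
  obtain ⟨T, hT⟩ := Filter.eventually_atTop.1 hev
  refine ⟨T, fun n hn => ?_⟩
  have h3 := hT n hn
  have h4 : V.eval ((n : ℕ) : ℝ) = ((v.eval (n : ℚ) : ℚ) : ℝ) := by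
    rw [hV, eval_map, Polynomial.eval₂_at_natCast]
    rfl
  rw [h4] at h3
  have : (0:ℝ) < ((v.eval (n:ℚ) : ℚ) : ℝ) := by linarith
  exact_mod_cast this

lemma natDegree_le_of_bound (p : ℚ[X]) (k : ℕ)
    (h : ∀ T : ℕ, ∃ n : ℕ, T ≤ n ∧ 0 ≤ p.eval (n:ℚ) ∧ p.eval (n:ℚ) ≤ ((n:ℚ)+1)^k) :
    p.natDegree ≤ k := by
  by_contra hk
  push_neg at hk
  have hp0 : p ≠ 0 := by
    intro h0
    rw [h0] at hk
    simp at hk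
  have hlc0 : p.leadingCoeff ≠ 0 := leadingCoeff_ne_zero.2 hp0
  have hdegpos : 0 < p.degree := natDegree_pos_iff_degree_pos.1 (by omega)
  rcases lt_or_gt_of_ne hlc0 with hneg | hpos
  · -- leading coeff negative : p eventually negative
    have hdeg' : 0 < (-p).degree := by rwa [degree_neg]
    have hlc' : 0 < (-p).leadingCoeff := by
      rw [leadingCoeff_neg]; linarith
    obtain ⟨T, hT⟩ := eval_pos_eventually (-p) hdeg' hlc'
    obtain ⟨n, hn, hge, _⟩ := h T
    have := hT n hn
    rw [eval_neg] at this
    linarith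
  · -- leading coeff positive : p - (X+1)^k eventually positive
    set q : ℚ[X] := (X + C 1)^k with hq
    have hqd : q.degree = (k : WithBot ℕ) := by
      rw [hq, degree_pow, degree_X_add_C]
      simp
    have hdlt : q.degree < p.degree := by
      rw [hqd, degree_eq_natDegree hp0]
      exact_mod_cast hk
    have hlcsub : (p - q).leadingCoeff = p.leadingCoeff :=
      leadingCoeff_sub_of_degree_lt hdlt
    have hdsub : (p - q).degree = p.degree := degree_sub_eq_left_of_degree_lt hdlt
    obtain ⟨T, hT⟩ := eval_pos_eventually (p - q) (hdsub ▸ hdegpos) (hlcsub ▸ hpos)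
    obtain ⟨n, hn, _, hle⟩ := h T
    have := hT n hn
    rw [eval_sub] at this
    have hqe : q.eval (n:ℚ) = ((n:ℚ)+1)^k := by
      rw [hq]; simp
    rw [hqe] at this
    linarith

lemma hasse_sub_congr (s : ℕ) (p q : ℚ[X]) (h : ∀ t, s < t → p.coeff t = q.coeff t) (y : ℚ) :
    (hasseDeriv s p).eval y - p.coeff s = (hasseDeriv s q).eval y - q.coeff s := by
  have key : hasseDeriv s p - C (p.coeff s) = hasseDeriv s q - C (q.coeff s) := by
    ext u
    rw [coeff_sub, coeff_sub, hasseDeriv_coeff, hasseDeriv_coeff]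
    rcases Nat.eq_zero_or_pos u with rfl | hu
    · simp
    · have : p.coeff (u + s) = q.coeff (u + s) := h _ (by omega)
      have hu0 : ¬ u = 0 := by omega
      rw [this, coeff_C, coeff_C, if_neg hu0, if_neg hu0]
  have := congrArg (fun r : ℚ[X] => r.eval y) key
  simpa using this

lemma exists_rep (M : ℕ) (hM : 0 < M) (x : ZMod M) (T : ℕ) :
    ∃ n : ℕ, T ≤ n ∧ (n : ZMod M) = x := by
  haveI : NeZero M := ⟨hM.ne'⟩
  refine ⟨x.val + (T + 1) * M, ?_, ?_⟩
  · have : M ≥ 1 := hM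
    nlinarith [Nat.zero_le x.val]
  · push_cast
    simp [ZMod.natCast_self, ZMod.natCast_val, ZMod.cast_id]

lemma mainL : ∀ (k : ℕ) (w : Fin k → ℕ), (∀ i, 0 < w i) → ∀ (M : ℕ), 0 < M → (∀ i, w i ∣ M) →
    ∀ (P : ZMod M → Polynomial ℚ) (N : ℕ),
    (∀ n : ℕ, N ≤ n → (P (n : ZMod M)).eval (n : ℚ) = hilbFn k w n) →
    ∀ (s i j : ℕ), i ≡ j [MOD deltaR k w s] →
    (P (i : ZMod M)).coeff s = (P (j : ZMod M)).coeff s := by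
  intro k
  induction k with
  | zero =>
    intro w hw M hM0 hM P N hP s i j hij
    -- every piece is the zero polynomial
    have hz : ∀ x : ZMod M, P x = 0 := by
      intro x
      apply eq_zero_of_infinite_isRoot
      have hinj : Function.Injective (fun t : ℕ => ((x.val + (N + t + 1) * M : ℕ) : ℚ)) := by
        intro t₁ t₂ h12
        simp only [] at h12
        have h13 : x.val + (N + t₁ + 1) * M = x.val + (N + t₂ + 1) * M := by exact_mod_cast h12
        have hM1 : 1 ≤ M := hM0
        have := Nat.eq_of_mul_eq_mul_right hM0 (by omega : (N + t₁ + 1) * M = (N + t₂ + 1) * M)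
        omega
      apply Set.infinite_of_injective_forall_mem hinj
      intro t
      set n : ℕ := x.val + (N + t + 1) * M with hn
      have hmul : N + t + 1 ≤ (N + t + 1) * M := Nat.le_mul_of_pos_right _ hM0
      have h1 : N ≤ n := by omega
      have h2 : 1 ≤ n := by omega
      have hx : (n : ZMod M) = x := by
        haveI : NeZero M := ⟨hM0.ne'⟩
        push_cast [hn]
        simp [ZMod.natCast_self, ZMod.natCast_val, ZMod.cast_id]
      have hempty : IsEmpty {a : Fin 0 → ℕ // ∑ i, a i * w i = n} := by
        refine ⟨fun a => ?_⟩
        have := a.2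
        simp at this
        omega
      have hval : hilbFn 0 w n = 0 := by
        rw [hilbFn]
        exact Nat.card_of_isEmpty
      have := hP n h1
      rw [hx, hval] at this
      simpa [Set.mem_setOf_eq, IsRoot] using this
    rw [hz, hz]
  | succ k IH =>
    intro w hw M hM0 hM P N hP
    -- degree bound : every piece has natDegree ≤ k
    have hdeg : ∀ x : ZMod M, (P x).natDegree ≤ k := by
      intro x
      apply natDegree_le_of_bound
      intro T
      obtain ⟨n, hn, hnx⟩ := exists_rep M hM0 x (max T N)
      refine ⟨n, le_trans (le_max_left _ _) hn, ?_, ?_⟩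
      · have he : (P x).eval (n:ℚ) = hilbFn (k+1) w n := by
          rw [← hnx]; exact hP n (le_trans (le_max_right _ _) hn)
        rw [he]
        positivity
      · have he : (P x).eval (n:ℚ) = hilbFn (k+1) w n := by
          rw [← hnx]; exact hP n (le_trans (le_max_right _ _) hn)
        rw [he]
        have hb := hilbFn_le w hw n
        have : ((hilbFn (k+1) w n : ℕ) : ℚ) ≤ (((n+1)^k : ℕ) : ℚ) := by exact_mod_cast hb
        push_cast at this
        convert this using 2
    suffices key : ∀ (b s : ℕ), k + 1 ≤ s + b → ∀ i j : ℕ,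
        i ≡ j [MOD deltaR (k+1) w s] → (P (i : ZMod M)).coeff s = (P (j : ZMod M)).coeff s by
      intro s i j hij
      exact key (k+1) s (by omega) i j hij
    intro b
    induction b with
    | zero =>
      intro s hs i j _
      have h1 : (P (i : ZMod M)).coeff s = 0 :=
        coeff_eq_zero_of_natDegree_lt (lt_of_le_of_lt (hdeg _) (by omega))
      have h2 : (P (j : ZMod M)).coeff s = 0 :=
        coeff_eq_zero_of_natDegree_lt (lt_of_le_of_lt (hdeg _) (by omega))
      rw [h1, h2]
    | succ b ihb =>
      intro s hs i j hij
      by_cases hsb : k + 1 ≤ s + b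
      · exact ihb s hsb i j hij
      · have hsk : s + 1 ≤ k + 1 := by omega
        set D := deltaR (k+1) w s with hD
        set f : ℕ → ℚ := fun a => (P (a : ZMod M)).coeff s with hf
        -- higher coefficients agree along D-congruence
        have highcoeff : ∀ (a c : ℕ), a ≡ c [MOD D] → ∀ t, s < t →
            (P (a : ZMod M)).coeff t = (P (c : ZMod M)).coeff t := by
          intro a c hac t hst
          have hdvd : deltaR (k+1) w t ∣ D := deltaR_dvd_of_le w (le_of_lt hst)
          exact ihb t (by omega) a c (hac.of_dvd hdvd)
        -- the key difference relation
        have KEY : ∀ (m : Fin (k+1)) (a c : ℕ), a ≡ c [MOD D] →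
            f (a + w m) - f a = f (c + w m) - f c := by
          intro m a c hac
          set e := w m with he
          set w' : Fin k → ℕ := w ∘ m.succAbove with hw'
          set P'' : ZMod M → ℚ[X] :=
            fun x => P x - (Polynomial.taylor (-(e:ℚ))) (P (x - (e : ZMod M))) with hP''def
          have hP'' : ∀ n : ℕ, N + e ≤ n → (P'' (n : ZMod M)).eval (n : ℚ) = hilbFn k w' n := by
            intro n hn
            have hen : e ≤ n := by omega
            have hcast : ((n : ZMod M) - (e : ZMod M)) = ((n - e : ℕ) : ZMod M) := by
              have := Nat.cast_sub hen (R := ZMod M)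
              rw [this]
            have heval : (P'' (n : ZMod M)).eval (n : ℚ)
                = (P (n : ZMod M)).eval (n : ℚ)
                  - (P ((n - e : ℕ) : ZMod M)).eval ((n - e : ℕ) : ℚ) := by
              rw [hP''def]
              simp only [eval_sub]
              rw [hcast, Polynomial.taylor_eval]
              congr 2
              have : ((n - e : ℕ) : ℚ) = (n : ℚ) - (e : ℚ) := by
                push_cast [hen]; ring
              rw [this]; ring
            rw [heval, hP n (by omega), hP (n - e) (by omega)]
            have hrec := hilbRec w hw m n
            rw [if_pos hen] at hrec
            have : ((hilbFn (k+1) w n : ℕ) : ℚ)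
                = ((hilbFn k w' n : ℕ) : ℚ) + ((hilbFn (k+1) w (n - e) : ℕ) : ℚ) := by
              exact_mod_cast congrArg (Nat.cast : ℕ → ℚ) hrec
            linarith
          have hw'pos : ∀ i, 0 < w' i := fun i => hw _
          have hM' : ∀ i, w' i ∣ M := fun i => hM _
          have hcong : (a + e) ≡ (c + e) [MOD deltaR k w' s] :=
            (hac.of_dvd (deltaR_succAbove_dvd w m s)).add_right e
          have hIH := IH w' hw'pos M hM0 hM' P'' (N + e) hP'' s (a + e) (c + e) hcong
          -- expand the coefficient of P''
          have hexp : ∀ u : ℕ, (P'' ((u + e : ℕ) : ZMod M)).coeff s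
              = (P ((u + e : ℕ) : ZMod M)).coeff s
                - (Polynomial.hasseDeriv s (P (u : ZMod M))).eval (-(e:ℚ)) := by
            intro u
            rw [hP''def]
            simp only [coeff_sub]
            congr 2
            rw [Polynomial.taylor_coeff]
            congr 2
            push_cast
            ring
          rw [hexp a, hexp c] at hIH
          have hHD := hasse_sub_congr s (P (a : ZMod M)) (P (c : ZMod M))
            (fun t ht => highcoeff a c hac t ht) (-(e:ℚ))
          simp only [hf]
          linarith
        -- φ is the D-step difference of f
        set φ : ℕ → ℚ := fun a => f (a + D) - f a with hφ
        have hstep : ∀ (m : Fin (k+1)) (a : ℕ), φ (a + w m) = φ a := by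
          intro m a
          have hmod : a ≡ (a + D) [MOD D] := by
            exact (Nat.modEq_iff_dvd' (by omega)).2 ⟨1, by omega⟩
          have := KEY m a (a + D) hmod
          have hcomm : a + w m + D = a + D + w m := by omega
          simp only [hφ, hcomm]
          linarith
        have hgcdstep := step_finset_gcd φ Finset.univ w (fun m _ => hstep m)
        have hDstep : ∀ a, φ (a + D) = φ a :=
          step_dvd φ (Finset.univ.gcd w) D hgcdstep (hD ▸ gcd_dvd_deltaR w hsk)
        -- linear growth along D-steps
        have hlin : ∀ (u a : ℕ), f (a + u * D) = f a + u * φ a := by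
          intro u
          induction u with
          | zero => intro a; simp
          | succ u ihu =>
            intro a
            have h1 : a + (u + 1) * D = (a + u * D) + D := by ring
            have h2 : φ (a + u * D) = φ a := step_mul φ D hDstep u a
            rw [h1]
            have : f (a + u * D + D) - f (a + u * D) = φ (a + u * D) := rfl
            rw [ihu a] at this
            rw [h2] at this
            push_cast
            linarith
        -- M-periodicity kills φ
        have hDM : D ∣ M := hD ▸ deltaR_dvd_M w M hM s
        have hφ0 : ∀ a, φ a = 0 := by
          intro a
          have hDpos : 0 < D := by
            rcases Nat.eq_zero_or_pos D with h0 | h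
            · exfalso; rw [h0] at hDM; simp at hDM; omega
            · exact h
          have hu : M / D * D = M := Nat.div_mul_cancel hDM
          have hupos : 0 < M / D := Nat.div_pos (Nat.le_of_dvd hM0 hDM) hDpos
          have hfM : f (a + M) = f a := by
            simp only [hf]
            congr 2
            push_cast
            simp [ZMod.natCast_self]
          have := hlin (M / D) a
          rw [hu, hfM] at this
          have hne : ((M / D : ℕ) : ℚ) ≠ 0 := by
            exact_mod_cast hupos.ne'
          have h0 : ((M / D : ℕ) : ℚ) * φ a = 0 := by linarith
          rcases mul_eq_zero.1 h0 with h | h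
          · exact absurd h hne
          · exact h
        -- conclude
        have hper : ∀ a, f (a + D) = f a := by
          intro a
          have := hφ0 a
          simp only [hφ] at this
          linarith
        rcases le_total i j with hle | hle
        · obtain ⟨u, hu⟩ : ∃ u, j = i + u * D := by
            have := (Nat.modEq_iff_dvd' hle).1 hij
            obtain ⟨u, huu⟩ := this
            have hcm : u * D = D * u := Nat.mul_comm _ _
            exact ⟨u, by omega⟩
          rw [hu]
          exact (step_mul f D hper u i).symm
        · obtain ⟨u, hu⟩ : ∃ u, i = j + u * D := by
            have := (Nat.modEq_iff_dvd' hle).1 hij.symm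
            obtain ⟨u, huu⟩ := this
            have hcm : u * D = D * u := Nat.mul_comm _ _
            exact ⟨u, by omega⟩
          rw [hu]
          exact step_mul f D hper u j

theorem stmt11 (k : ℕ) (w : Fin k → ℕ) (hw : ∀ i, 0 < w i)
    (hgcd : Finset.univ.gcd w = 1)
    (P : ZMod (Finset.univ.lcm w) → Polynomial ℚ)
    (hP : ∃ N : ℕ, ∀ n : ℕ, N ≤ n →
      (P (n : ZMod (Finset.univ.lcm w))).eval (n : ℚ) = hilbFn k w n)
    (r : ℕ) (hr : r ≤ k - 1)
    (i j : ℕ) (hij : i ≡ j [MOD deltaR k w r]) :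
    (P (i : ZMod (Finset.univ.lcm w))).coeff r
      = (P (j : ZMod (Finset.univ.lcm w))).coeff r := by
  obtain ⟨N, hPN⟩ := hP
  have hM0 : 0 < Finset.univ.lcm w := by
    rcases Nat.eq_zero_or_pos (Finset.univ.lcm w) with h0 | h
    · exfalso
      rw [Finset.lcm_eq_zero_iff] at h0
      obtain ⟨x, _, hx⟩ := h0
      exact absurd hx (hw x).ne'
    · exact h
  exact mainL k w hw (Finset.univ.lcm w) hM0
    (fun i => Finset.dvd_lcm (Finset.mem_univ i)) P N hPN r i j hij
end

section
/- In the partial fraction decomposition 1/∏_{i=1}^k(1−t^{d_i}) with gcd(d_1,...,d_k) = 1, the coefficient A_{k−1} of 1/(1−t)^{k−1} equals (Σ_{i=1}^k d_i − k) / (2·∏_{i=1}^k d_i). -/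
theorem stmt15 (k : ℕ) (d : Fin k → ℕ) (hd : ∀ i, 0 < d i)
    (hgcd : Finset.univ.gcd d = 1) :
    Filter.Tendsto
      (fun t : ℝ => (1 - t) ^ (k - 1) *
        (1 / ∏ i, (1 - t ^ (d i)) - (1 / ∏ i, (d i : ℝ)) / (1 - t) ^ k))
      (nhdsWithin 1 {1}ᶜ)
      (nhds ((∑ i, (d i : ℝ) - k) / (2 * ∏ i, (d i : ℝ)))) := by
  classical
  rcases Nat.eq_zero_or_pos k with hk | hk
  · subst hk
    simp only [Finset.univ_eq_empty, Finset.prod_empty, Finset.sum_empty]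
    norm_num
  set P : ℝ := ∏ i, (d i : ℝ) with hPdef
  have hP : 0 < P := Finset.prod_pos fun i _ => by exact_mod_cast hd i
  set G : ℝ → ℝ := fun t => ∏ i, ∑ j ∈ Finset.range (d i), t ^ j with hGdef
  have hG1 : G 1 = P := by simp [hGdef, hPdef]
  set D : ℝ := ∑ i, (∏ j ∈ Finset.univ.erase i, (d j : ℝ)) * ((d i : ℝ) * ((d i : ℝ) - 1) / 2)
    with hDdef
  -- derivative of each geometric-sum factor at 1
  have hg : ∀ i : Fin k, HasDerivAt (fun t : ℝ => ∑ j ∈ Finset.range (d i), t ^ j)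
      ((d i : ℝ) * ((d i : ℝ) - 1) / 2) 1 := by
    intro i
    have h1 : HasDerivAt (fun t : ℝ => ∑ j ∈ Finset.range (d i), t ^ j)
        (∑ j ∈ Finset.range (d i), (j : ℝ) * (1:ℝ) ^ (j - 1)) 1 :=
      HasDerivAt.fun_sum fun j _ => hasDerivAt_pow j 1
    convert h1 using 1
    have h2 : ((∑ j ∈ Finset.range (d i), j) * 2 : ℕ) = d i * (d i - 1) :=
      Finset.sum_range_id_mul_two (d i)
    have h3 : ((d i : ℝ) - 1) = ((d i - 1 : ℕ) : ℝ) := by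
      rw [Nat.cast_sub (hd i)]; norm_num
    simp only [one_pow, mul_one]
    have h4 : (∑ x ∈ Finset.range (d i), (x:ℝ)) = ((∑ x ∈ Finset.range (d i), x : ℕ) : ℝ) := by
      push_cast; rfl
    rw [h3, h4, div_eq_iff (two_ne_zero)]
    exact_mod_cast h2.symm
  have hG' : HasDerivAt G D 1 := by
    have h1 := HasDerivAt.fun_finsetProd (u := Finset.univ)
      (f := fun i (t : ℝ) => ∑ j ∈ Finset.range (d i), t ^ j)
      (f' := fun i => (d i : ℝ) * ((d i : ℝ) - 1) / 2) (x := 1) (fun i _ => hg i)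
    convert h1 using 1
    case e'_4 => rfl
    case e'_5 => rfl
    rw [hDdef]
    apply Finset.sum_congr rfl
    intro i _
    rw [smul_eq_mul]
    congr 1
    apply Finset.prod_congr rfl
    intro j _
    simp
  have hGne : G 1 ≠ 0 := by rw [hG1]; exact hP.ne'
  have hF : HasDerivAt (fun t => (G t)⁻¹) (-D / G 1 ^ 2) 1 := hG'.inv hGne
  have hslope := hasDerivAt_iff_tendsto_slope.mp hF
  have hlim : Filter.Tendsto (fun t : ℝ => -slope (fun t => (G t)⁻¹) 1 t)
      (nhdsWithin 1 {1}ᶜ) (nhds (D / P ^ 2)) := by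
    have := hslope.neg
    rw [hG1] at this
    convert this using 2
    ring
  -- value identification
  have hval : D / P ^ 2 = (∑ i, (d i : ℝ) - k) / (2 * P) := by
    have hD : D = P * (∑ i, (d i : ℝ) - k) / 2 := by
      rw [hDdef]
      have : ∀ i : Fin k, (∏ j ∈ Finset.univ.erase i, (d j : ℝ)) *
          ((d i : ℝ) * ((d i : ℝ) - 1) / 2) = P * ((d i : ℝ) - 1) / 2 := by
        intro i
        have h := Finset.prod_erase_mul Finset.univ (fun j => (d j : ℝ)) (Finset.mem_univ i)
        rw [hPdef, ← h]
        ring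
      rw [Finset.sum_congr rfl fun i _ => this i]
      rw [← Finset.sum_div, ← Finset.mul_sum, Finset.sum_sub_distrib]
      simp [Finset.card_univ, mul_sub]
    rw [hD]
    field_simp
  rw [← hval]
  apply hlim.congr'
  -- eventual equality on {1}ᶜ
  filter_upwards [self_mem_nhdsWithin] with t ht
  have htne : t ≠ 1 := ht
  have ht1 : (1 : ℝ) - t ≠ 0 := sub_ne_zero.mpr (Ne.symm htne)
  have hfac : ∀ i : Fin k, 1 - t ^ (d i) = (1 - t) * ∑ j ∈ Finset.range (d i), t ^ j := by
    intro i
    have := geom_sum_mul t (d i)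
    linear_combination this
  have hprod : ∏ i, (1 - t ^ (d i)) = (1 - t) ^ k * G t := by
    rw [Finset.prod_congr rfl fun i _ => hfac i, Finset.prod_mul_distrib]
    simp [hGdef, Finset.card_univ]
  have hpow : (1 - t) ^ (k - 1) * ((1 - t) ^ k)⁻¹ = (1 - t)⁻¹ := by
    have hk1 : k = (k - 1) + 1 := (Nat.succ_pred_eq_of_pos hk).symm
    rw [hk1, pow_succ, mul_inv, ← mul_assoc, Nat.add_sub_cancel,
      mul_inv_cancel₀ (pow_ne_zero _ ht1), one_mul]
  have hslope_eq : -slope (fun t => (G t)⁻¹) 1 t = (1 - t)⁻¹ * ((G t)⁻¹ - P⁻¹) := by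
    rw [slope_def_field]
    rw [hG1]
    rw [div_eq_mul_inv]
    have h5 : (t - 1) = -(1 - t) := by ring
    rw [h5, inv_neg]
    ring
  rw [hslope_eq, hprod, ← hpow]
  ring
end

section
/- Let d_1,...,d_k be positive integers with gcd 1, d = lcm(d_i), ζ a primitive d-th root of unity, and H(n) = #{α ∈ ℕ^k : Σ α_i d_i = n}. With T̃_i defined as the set of residues j mod d (1 ≤ j ≤ d−1) that lie in exactly i of the sets M_s = {d/d_s,...,(d_s−1)d/d_s} for 1 ≤ i ≤ k−1, and T̃_k = {0}, we have for all n ≥ 1: H(n) = (1/n)·Σ_{r=1}^n [Σ_{i=1}^k i·(Σ_{j ∈ T̃_i} ζ^{jr})]·H(n−r). -/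
open Finset

namespace Stmt19Aux

variable {k : ℕ} (d : Fin k → ℕ)

/-- The finite set of solutions of `∑ a i * d i = m`. -/
def S (m : ℕ) : Finset (Fin k → ℕ) :=
  (Fintype.piFinset (fun _ => Finset.range (m + 1))).filter (fun a => ∑ i, a i * d i = m)

variable {d}

lemma mem_S (hd : ∀ i, 0 < d i) {m : ℕ} {a : Fin k → ℕ} :
    a ∈ S d m ↔ ∑ i, a i * d i = m := by
  constructor
  · exact fun h => (Finset.mem_filter.mp h).2
  · intro h
    refine Finset.mem_filter.mpr ⟨Fintype.mem_piFinset.mpr fun i => ?_, h⟩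
    rw [Finset.mem_range, Nat.lt_succ_iff]
    calc a i ≤ a i * d i := Nat.le_mul_of_pos_right _ (hd i)
      _ ≤ ∑ j, a j * d j :=
          Finset.single_le_sum (f := fun j => a j * d j) (fun j _ => Nat.zero_le _)
            (Finset.mem_univ i)
      _ = m := h

lemma H_eq (hd : ∀ i, 0 < d i) (H : ℕ → ℕ)
    (hH : ∀ n, H n = Nat.card {a : Fin k → ℕ // ∑ i, a i * d i = n}) (m : ℕ) :
    H m = (S d m).card := by
  rw [hH m, ← Nat.card_eq_finsetCard]
  exact Nat.card_congr (Equiv.subtypeEquivRight (fun a => (mem_S hd).symm))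

lemma card_shift (hd : ∀ i, 0 < d i) (s : Fin k) (t m : ℕ) :
    ((S d (t + m * d s)).filter (fun a => m ≤ a s)).card = (S d t).card := by
  classical
  symm
  apply Finset.card_bij (fun a _ => fun i => a i + if i = s then m else 0)
  · intro a ha
    rw [mem_S hd] at ha
    refine Finset.mem_filter.mpr ⟨(mem_S hd).mpr ?_, by simp⟩
    have : ∀ i : Fin k, (a i + if i = s then m else 0) * d i
        = a i * d i + (if i = s then m * d s else 0) := by
      intro i
      by_cases h : i = s <;> simp [h, add_mul]
    rw [Finset.sum_congr rfl (fun i _ => this i), Finset.sum_add_distrib, ha,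
      Finset.sum_ite_eq' Finset.univ s (fun _ => m * d s)]
    simp
  · intro a _ b _ hab
    funext i
    have := congrFun hab i
    by_cases h : i = s <;> simpa [h] using this
  · intro b hb
    obtain ⟨hbS, hbm⟩ := Finset.mem_filter.mp hb
    rw [mem_S hd] at hbS
    refine ⟨fun i => b i - if i = s then m else 0, (mem_S hd).mpr ?_, ?_⟩
    · have split : ∀ (c : Fin k → ℕ), ∑ i, c i * d i
          = c s * d s + ∑ i ∈ Finset.univ.erase s, c i * d i :=
        fun c => (Finset.add_sum_erase _ _ (Finset.mem_univ s)).symm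
      have h1 := split b
      have h2 := split (fun i => b i - if i = s then m else 0)
      simp only [if_pos rfl, ite_true, eq_self_iff_true] at h2
      have h3 : ∑ i ∈ Finset.univ.erase s, (b i - if i = s then m else 0) * d i
          = ∑ i ∈ Finset.univ.erase s, b i * d i := by
        refine Finset.sum_congr rfl fun i hi => ?_
        have : i ≠ s := (Finset.mem_erase.mp hi).1
        simp [this]
      rw [h3] at h2
      have h4 : (b s - m) * d s = b s * d s - m * d s := Nat.sub_mul _ _ _
      have h5 : m * d s ≤ b s * d s := Nat.mul_le_mul_right _ hbm
      rw [h2, h4]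
      omega
    · funext i
      by_cases h : i = s
      · subst h
        simp [Nat.sub_add_cancel hbm]
      · simp [h]

lemma sum_coord (hd : ∀ i, 0 < d i) (s : Fin k) (n : ℕ) :
    ∑ a ∈ S d n, a s = ∑ m ∈ Finset.Icc 1 (n / d s), (S d (n - m * d s)).card := by
  classical
  have hb : ∀ a ∈ S d n, a s ≤ n / d s := by
    intro a ha
    rw [Nat.le_div_iff_mul_le (hd s)]
    calc a s * d s ≤ ∑ j, a j * d j :=
          Finset.single_le_sum (f := fun j => a j * d j) (fun j _ => Nat.zero_le _)
            (Finset.mem_univ s)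
      _ = n := (mem_S hd).mp ha
  have step1 : ∀ a ∈ S d n,
      a s = ∑ m ∈ Finset.Icc 1 (n / d s), if m ≤ a s then 1 else 0 := by
    intro a ha
    rw [← Finset.card_filter]
    have : (Finset.Icc 1 (n / d s)).filter (fun m => m ≤ a s) = Finset.Icc 1 (a s) := by
      ext m
      have := hb a ha
      simp only [Finset.mem_filter, Finset.mem_Icc]
      omega
    rw [this, Nat.card_Icc]
    omega
  rw [Finset.sum_congr rfl step1, Finset.sum_comm]
  refine Finset.sum_congr rfl fun m hm => ?_
  have hmn : m * d s ≤ n := by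
    rw [Finset.mem_Icc] at hm
    calc m * d s ≤ n / d s * d s := Nat.mul_le_mul_right _ hm.2
      _ ≤ n := Nat.div_mul_le_self _ _
  rw [← Finset.card_filter]
  have : n - m * d s + m * d s = n := Nat.sub_add_cancel hmn
  conv_lhs => rw [← this]
  exact card_shift hd s (n - m * d s) m

lemma key_nat (hd : ∀ i, 0 < d i) (n : ℕ) :
    n * (S d n).card
      = ∑ r ∈ Finset.Icc 1 n, (∑ s, if d s ∣ r then d s else 0) * (S d (n - r)).card := by
  classical
  -- LHS
  have lhs : n * (S d n).card = ∑ s, d s * ∑ m ∈ Finset.Icc 1 (n / d s), (S d (n - m * d s)).card := by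
    have : n * (S d n).card = ∑ a ∈ S d n, ∑ s, a s * d s := by
      rw [Finset.sum_congr rfl (fun a ha => (mem_S hd).mp ha), Finset.sum_const, smul_eq_mul,
        mul_comm]
    rw [this, Finset.sum_comm]
    refine Finset.sum_congr rfl fun s _ => ?_
    rw [← Finset.sum_mul, sum_coord hd s n, mul_comm]
  rw [lhs]
  -- RHS
  have rhs : ∀ r, (∑ s, if d s ∣ r then d s else 0) * (S d (n - r)).card
      = ∑ s, if d s ∣ r then d s * (S d (n - r)).card else 0 := by
    intro r
    rw [Finset.sum_mul]
    exact Finset.sum_congr rfl fun s _ => by split <;> simp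
  rw [Finset.sum_congr rfl fun r _ => rhs r, Finset.sum_comm]
  refine Finset.sum_congr rfl fun s _ => ?_
  rw [← Finset.sum_filter]
  have himg : (Finset.Icc 1 n).filter (fun r => d s ∣ r)
      = (Finset.Icc 1 (n / d s)).image (· * d s) := by
    ext r
    simp only [Finset.mem_filter, Finset.mem_Icc, Finset.mem_image]
    constructor
    · rintro ⟨⟨h1, h2⟩, c, rfl⟩
      refine ⟨c, ⟨?_, ?_⟩, mul_comm _ _⟩
      · rcases Nat.eq_zero_or_pos c with h | h
        · subst h; simp at h1
        · exact h
      · rw [Nat.le_div_iff_mul_le (hd s), mul_comm]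
        exact h2
    · rintro ⟨c, ⟨hc1, hc2⟩, rfl⟩
      rw [Nat.le_div_iff_mul_le (hd s)] at hc2
      exact ⟨⟨Nat.mul_pos hc1 (hd s), hc2⟩, dvd_mul_left _ _⟩
  rw [himg, Finset.sum_image (fun x _ y _ h => Nat.eq_of_mul_eq_mul_right (hd s) h),
    Finset.mul_sum]

end Stmt19Aux

theorem stmt19 (k : ℕ) (d : Fin k → ℕ) (hd : ∀ i, 0 < d i)
    (hgcd : Finset.univ.gcd d = 1)
    (ζ : ℂ) (hζ : IsPrimitiveRoot ζ (Finset.univ.lcm d))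
    (H : ℕ → ℕ)
    (hH : ∀ n, H n = Nat.card {a : Fin k → ℕ // ∑ i, a i * d i = n})
    (M : Fin k → Finset ℕ)
    (hM : ∀ s, M s =
      (Finset.Icc 1 (d s - 1)).image (· * (Finset.univ.lcm d / d s)))
    (T : ℕ → Finset ℕ)
    (hT : ∀ i, 1 ≤ i → i < k → T i =
      (Finset.Icc 1 (Finset.univ.lcm d - 1)).filter
        (fun j => (Finset.univ.filter (fun s => j ∈ M s)).card = i))
    (hTk : T k = {0})
    (n : ℕ) (hn : 1 ≤ n) :
    (H n : ℂ) = (1 / n) *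
      ∑ r ∈ Finset.Icc 1 n,
        (∑ i ∈ Finset.Icc 1 k, (i : ℂ) * ∑ j ∈ T i, ζ ^ (j * r)) * H (n - r) := by
  classical
  set L := Finset.univ.lcm d with hLdef
  have hk : 0 < k := by
    rcases Nat.eq_zero_or_pos k with h | h
    · subst h
      simp [Finset.univ_eq_empty] at hgcd
    · exact h
  have hL : 0 < L := by
    rcases Nat.eq_zero_or_pos L with h | h
    · exfalso
      rw [hLdef, Finset.lcm_eq_zero_iff] at h
      obtain ⟨s, -, hs⟩ := h
      exact (hd s).ne' hs
    · exact h
  have hdvd : ∀ s, d s ∣ L := fun s => Finset.dvd_lcm (Finset.mem_univ s)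
  have hq : ∀ s, 0 < L / d s := fun s => Nat.div_pos (Nat.le_of_dvd hL (hdvd s)) (hd s)
  have hqd : ∀ s, L / d s * d s = L := fun s => Nat.div_mul_cancel (hdvd s)
  -- membership in M s
  have hMmem : ∀ (s : Fin k) (j : ℕ),
      j ∈ M s ↔ 1 ≤ j ∧ j ≤ L - 1 ∧ L / d s ∣ j := by
    intro s j
    rw [hM s]
    simp only [Finset.mem_image, Finset.mem_Icc]
    constructor
    · rintro ⟨t, ⟨ht1, ht2⟩, rfl⟩
      refine ⟨?_, ?_, dvd_mul_left _ _⟩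
      · calc 1 ≤ L / d s := hq s
          _ ≤ t * (L / d s) := Nat.le_mul_of_pos_left _ ht1
      · have h1 : t * (L / d s) ≤ (d s - 1) * (L / d s) := Nat.mul_le_mul_right _ ht2
        have h2 : (d s - 1) * (L / d s) = L - L / d s := by
          rw [Nat.sub_mul, one_mul, mul_comm, hqd s]
        have := hq s
        omega
    · rintro ⟨h1, h2, t, rfl⟩
      have ht1 : 1 ≤ t := by
        rcases Nat.eq_zero_or_pos t with h | h
        · subst h; simp at h1
        · exact h
      have ht2 : t ≤ d s - 1 := by
        have hlt : L / d s * t < L / d s * d s := by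
          rw [hqd s]; omega
        have := Nat.lt_of_mul_lt_mul_left hlt
        omega
      exact ⟨t, ⟨ht1, ht2⟩, mul_comm _ _⟩
  -- geometric sum over each M s
  have hgeom : ∀ (s : Fin k) (r : ℕ),
      (1 : ℂ) + ∑ j ∈ M s, ζ ^ (j * r) = if d s ∣ r then (d s : ℂ) else 0 := by
    intro s r
    have hinj : ∀ x ∈ Finset.Icc 1 (d s - 1), ∀ y ∈ Finset.Icc 1 (d s - 1),
        x * (L / d s) = y * (L / d s) → x = y :=
      fun x _ y _ h => Nat.eq_of_mul_eq_mul_right (hq s) h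
    rw [hM s, Finset.sum_image hinj]
    have hexp : ∀ t ∈ Finset.Icc 1 (d s - 1),
        ζ ^ (t * (L / d s) * r) = (ζ ^ (L / d s * r)) ^ t := by
      intro t _
      rw [← pow_mul]
      congr 1
      ring
    rw [Finset.sum_congr rfl hexp]
    set w := ζ ^ (L / d s * r) with hw
    have hrange : ∑ t ∈ Finset.range (d s), w ^ t
        = 1 + ∑ t ∈ Finset.Icc 1 (d s - 1), w ^ t := by
      rw [Finset.range_eq_Ico, Finset.sum_eq_sum_Ico_succ_bot (hd s),
        show Finset.Ico 1 (d s) = Finset.Icc 1 (d s - 1) by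
          ext x
          simp only [Finset.mem_Ico, Finset.mem_Icc]
          omega]
      simp
    by_cases hdr : d s ∣ r
    · have hw1 : w = 1 := by
        rw [hw, hζ.pow_eq_one_iff_dvd]
        obtain ⟨c, rfl⟩ := hdr
        exact ⟨c, by rw [← mul_assoc, hqd s]⟩
      rw [if_pos hdr, ← hrange, hw1]
      simp
    · have hw1 : w ≠ 1 := by
        intro h
        rw [hw, hζ.pow_eq_one_iff_dvd] at h
        refine hdr ?_
        have h2 : L / d s * d s ∣ L / d s * r := by
          rw [hqd s]; exact h
        rwa [Nat.mul_dvd_mul_iff_left (hq s)] at h2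
      have hzero : ∑ t ∈ Finset.range (d s), w ^ t = 0 := by
        rw [geom_sum_eq hw1]
        have hpow : w ^ d s = 1 := by
          rw [hw, ← pow_mul, hζ.pow_eq_one_iff_dvd]
          exact ⟨r, by rw [show L / d s * r * d s = L / d s * d s * r by ring, hqd s]⟩
        rw [hpow]
        simp
      rw [if_neg hdr, ← hrange, hzero]
  -- no j in [1, L-1] lies in all M s
  have hcj_ne : ∀ j ∈ Finset.Icc 1 (L - 1),
      (Finset.univ.filter (fun s => j ∈ M s)).card ≠ k := by
    intro j hj hcard
    rw [Finset.mem_Icc] at hj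
    have huniv : Finset.univ.filter (fun s => j ∈ M s) = Finset.univ :=
      Finset.eq_univ_of_card _ (hcard.trans (Fintype.card_fin k).symm)
    have hall : ∀ s, j ∈ M s := by
      intro s
      have hs : s ∈ Finset.univ.filter (fun s => j ∈ M s) := huniv.symm ▸ Finset.mem_univ s
      exact (Finset.mem_filter.mp hs).2
    have h1 : ∀ s ∈ Finset.univ, L ∣ j * d s := by
      intro s _
      obtain ⟨t, ht⟩ := ((hMmem s j).mp (hall s)).2.2
      exact ⟨t, by rw [ht, show L / d s * t * d s = L / d s * d s * t by ring, hqd s]⟩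
    have h2 : L ∣ Finset.univ.gcd (fun s => j * d s) := Finset.dvd_gcd h1
    rw [Finset.gcd_mul_left, hgcd, mul_one, normalize_eq] at h2
    have := Nat.le_of_dvd (by omega) h2
    omega
  -- the coefficient computation
  have hcr : ∀ r : ℕ,
      (∑ i ∈ Finset.Icc 1 k, (i : ℂ) * ∑ j ∈ T i, ζ ^ (j * r))
        = ∑ s, if d s ∣ r then (d s : ℂ) else 0 := by
    intro r
    have hk' : k - 1 + 1 = k := by omega
    rw [show Finset.Icc 1 k = Finset.Icc 1 (k - 1 + 1) by rw [hk'],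
      Finset.sum_Icc_succ_top (by omega : 1 ≤ k - 1 + 1), hk']
    have hlast : ((k : ℕ) : ℂ) * ∑ j ∈ T k, ζ ^ (j * r) = ((k : ℕ) : ℂ) := by
      rw [hTk]
      simp
    rw [hlast]
    have hmid : ∑ i ∈ Finset.Icc 1 (k - 1), (i : ℂ) * ∑ j ∈ T i, ζ ^ (j * r)
        = ∑ j ∈ Finset.Icc 1 (L - 1),
            ((Finset.univ.filter (fun s => j ∈ M s)).card : ℂ) * ζ ^ (j * r) := by
      have step : ∀ i ∈ Finset.Icc 1 (k - 1), (i : ℂ) * ∑ j ∈ T i, ζ ^ (j * r)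
          = ∑ j ∈ Finset.Icc 1 (L - 1),
              if (Finset.univ.filter (fun s => j ∈ M s)).card = i
              then (i : ℂ) * ζ ^ (j * r) else 0 := by
        intro i hi
        rw [Finset.mem_Icc] at hi
        rw [hT i hi.1 (by omega), Finset.sum_filter, Finset.mul_sum]
        exact Finset.sum_congr rfl fun j _ => by split <;> simp
      rw [Finset.sum_congr rfl step, Finset.sum_comm]
      refine Finset.sum_congr rfl fun j hj => ?_
      rw [Finset.sum_ite_eq]
      by_cases h : (Finset.univ.filter (fun s => j ∈ M s)).card ∈ Finset.Icc 1 (k - 1)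
      · rw [if_pos h]
      · rw [if_neg h]
        have h1 : (Finset.univ.filter (fun s => j ∈ M s)).card ≤ k :=
          le_trans (Finset.card_filter_le _ _) (by simp)
        have h2 := hcj_ne j hj
        rw [Finset.mem_Icc] at h
        have h0 : (Finset.univ.filter (fun s => j ∈ M s)).card = 0 := by omega
        rw [h0]
        simp
    rw [hmid]
    have hsplit : ∑ j ∈ Finset.Icc 1 (L - 1),
        ((Finset.univ.filter (fun s => j ∈ M s)).card : ℂ) * ζ ^ (j * r)
          = ∑ s, ∑ j ∈ M s, ζ ^ (j * r) := by
      have step : ∀ j ∈ Finset.Icc 1 (L - 1),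
          ((Finset.univ.filter (fun s => j ∈ M s)).card : ℂ) * ζ ^ (j * r)
            = ∑ s, if j ∈ M s then ζ ^ (j * r) else 0 := by
        intro j _
        rw [Finset.card_filter]
        push_cast
        rw [Finset.sum_mul]
        exact Finset.sum_congr rfl fun s _ => by split <;> simp
      rw [Finset.sum_congr rfl step, Finset.sum_comm]
      refine Finset.sum_congr rfl fun s _ => ?_
      rw [Finset.sum_ite_mem]
      congr 1
      rw [Finset.inter_eq_right]
      intro j hj
      have := (hMmem s j).mp hj
      rw [Finset.mem_Icc]
      omega
    rw [hsplit]
    have hback : ∑ s, (if d s ∣ r then (d s : ℂ) else 0)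
        = ((k : ℕ) : ℂ) + ∑ s, ∑ j ∈ M s, ζ ^ (j * r) := by
      rw [Finset.sum_congr rfl (fun s _ => (hgeom s r).symm), Finset.sum_add_distrib]
      congr 1
      simp
    rw [hback]
    ring
  -- the natural-number recursion
  have hH' := Stmt19Aux.H_eq hd H hH
  have hnat : ∑ r ∈ Finset.Icc 1 n, (∑ s, if d s ∣ r then d s else 0) * H (n - r)
      = n * H n := by
    simp only [hH']
    exact (Stmt19Aux.key_nat hd n).symm
  have hstep : ∀ r ∈ Finset.Icc 1 n,
      (∑ i ∈ Finset.Icc 1 k, (i : ℂ) * ∑ j ∈ T i, ζ ^ (j * r)) * (H (n - r) : ℂ)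
        = (∑ s, if d s ∣ r then (d s : ℂ) else 0) * (H (n - r) : ℂ) := by
    intro r _
    rw [hcr r]
  rw [Finset.sum_congr rfl hstep]
  have hC : ∑ r ∈ Finset.Icc 1 n,
      (∑ s, if d s ∣ r then (d s : ℂ) else 0) * (H (n - r) : ℂ) = (n : ℂ) * H n := by
    calc ∑ r ∈ Finset.Icc 1 n, (∑ s, if d s ∣ r then (d s : ℂ) else 0) * (H (n - r) : ℂ)
        = ((∑ r ∈ Finset.Icc 1 n, (∑ s, if d s ∣ r then d s else 0) * H (n - r) : ℕ) : ℂ) := by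
          push_cast
          rfl
      _ = ((n * H n : ℕ) : ℂ) := by rw [hnat]
      _ = (n : ℂ) * H n := by push_cast; rfl
  rw [hC]
  have hn' : (n : ℂ) ≠ 0 := Nat.cast_ne_zero.mpr (by omega)
  field_simp
end
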